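/- arXiv:1211.3404 — 5 statements merged into one kernel-verified Lean document; each statement's English description precedes it below -/
import Mathlib

section
/- Let E be a complex Banach space, let T : E → E be a compact operator, and let λ be a nonzero complex number. Then the kernel of T − λ (λ denoting λ·id) is a finite-dimensional subspace of E, and the range of T − λ is a closed subspace of E. -/
open Metric Set Filter Topology Pointwise

section Aux

variable {E : Type*} [NormedAddCommGroup E] [NormedSpace ℂ E] [CompleteSpace E]

/-- The kernel of `T - λ` is finite dimensional. -/
lemma aux_ker_fd (T : E →L[ℂ] E) (hT : IsCompactOperator T) (lam : ℂ) (hlam : lam ≠ 0) :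
    FiniteDimensional ℂ (LinearMap.ker ((T - lam • ContinuousLinearMap.id ℂ E : E →L[ℂ] E) : E →ₗ[ℂ] E)) := by
  set S : E →L[ℂ] E := T - lam • ContinuousLinearMap.id ℂ E with hSdef
  set N : Submodule ℂ E := LinearMap.ker (S : E →ₗ[ℂ] E) with hNdef
  have hK : IsCompact (closure (T '' Metric.closedBall 0 1)) :=
    hT.isCompact_closure_image_closedBall (𝕜₁ := ℂ) 1
  have hK' : IsCompact (lam⁻¹ • closure (T '' Metric.closedBall 0 1)) := hK.smul lam⁻¹
  have hNclosed : IsClosed (N : Set E) := ContinuousLinearMap.isClosed_ker S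
  have hsub : (N : Set E) ∩ Metric.closedBall 0 1 ⊆
      lam⁻¹ • closure (T '' Metric.closedBall 0 1) := by
    rintro x ⟨hx1, hx2⟩
    have hSx : S x = 0 := LinearMap.mem_ker.1 hx1
    have hSx' : T x - lam • x = 0 := by
      rw [hSdef] at hSx
      simpa using hSx
    have hTx : T x = lam • x := sub_eq_zero.1 hSx'
    refine Set.mem_smul_set.2 ⟨T x, subset_closure (mem_image_of_mem T hx2), ?_⟩
    rw [hTx, inv_smul_smul₀ hlam]
  have hAcomp : IsCompact ((N : Set E) ∩ Metric.closedBall 0 1) :=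
    hK'.of_isClosed_subset (hNclosed.inter Metric.isClosed_closedBall) hsub
  have hball : IsCompact (Metric.closedBall (0 : N) 1) := by
    rw [Subtype.isCompact_iff]
    convert hAcomp using 1
    ext y
    simp only [Set.mem_image, Metric.mem_closedBall, dist_zero_right, Set.mem_inter_iff,
      SetLike.mem_coe]
    constructor
    · rintro ⟨v, hv, rfl⟩
      exact ⟨v.2, hv⟩
    · rintro ⟨hy, hy2⟩
      exact ⟨⟨y, hy⟩, hy2, rfl⟩
  exact FiniteDimensional.of_isCompact_closedBall₀ ℂ one_pos hball

/-- `T - λ` is bounded below modulo its kernel. -/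
lemma aux_bound (T : E →L[ℂ] E) (hT : IsCompactOperator T) (lam : ℂ) (hlam : lam ≠ 0) :
    ∃ c > 0, ∀ x : E, c * infDist x
      ((LinearMap.ker ((T - lam • ContinuousLinearMap.id ℂ E : E →L[ℂ] E) : E →ₗ[ℂ] E) : Submodule ℂ E) : Set E)
      ≤ ‖(T - lam • ContinuousLinearMap.id ℂ E) x‖ := by
  set S : E →L[ℂ] E := T - lam • ContinuousLinearMap.id ℂ E with hSdef
  set N : Submodule ℂ E := LinearMap.ker (S : E →ₗ[ℂ] E) with hNdef
  by_contra hcon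
  push_neg at hcon
  have H : ∀ n : ℕ, ∃ x : E, ‖S x‖ < ((n : ℝ) + 1)⁻¹ * infDist x (N : Set E) := by
    intro n
    obtain ⟨x, hx⟩ := hcon (((n : ℝ) + 1)⁻¹) (by positivity)
    exact ⟨x, hx⟩
  choose x hx using H
  set d : ℕ → ℝ := fun n => infDist (x n) (N : Set E) with hddef
  have hxd : ∀ n, ‖S (x n)‖ < ((n : ℝ) + 1)⁻¹ * d n := hx
  have hd_pos : ∀ n, 0 < d n := by
    intro n
    rcases lt_or_ge 0 (d n) with h | h
    · exact h
    · exfalso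
      have h0 : d n = 0 := le_antisymm h Metric.infDist_nonneg
      have := hxd n
      rw [h0, mul_zero] at this
      exact absurd this (not_lt.2 (norm_nonneg _))
  have hNne : (N : Set E).Nonempty := ⟨0, N.zero_mem⟩
  have Hy : ∀ n, ∃ y ∈ (N : Set E), dist (x n) y < 2 * d n := by
    intro n
    exact (Metric.infDist_lt_iff hNne).1 (by linarith [hd_pos n])
  choose y hyN hy using Hy
  set v : ℕ → E := fun n => ((d n : ℂ))⁻¹ • (x n - y n) with hvdef
  have hnormc : ∀ n, ‖((d n : ℂ))⁻¹‖ = (d n)⁻¹ := by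
    intro n
    rw [norm_inv, Complex.norm_real, Real.norm_eq_abs, abs_of_pos (hd_pos n)]
  have hdne : ∀ n, (d n : ℂ) ≠ 0 := by
    intro n
    exact_mod_cast (hd_pos n).ne'
  have hv_norm : ∀ n, ‖v n‖ ≤ 2 := by
    intro n
    show ‖((d n : ℂ))⁻¹ • (x n - y n)‖ ≤ 2
    rw [norm_smul, hnormc]
    have h1 : ‖x n - y n‖ < 2 * d n := by rw [← dist_eq_norm]; exact hy n
    rw [inv_mul_le_iff₀ (hd_pos n)]
    linarith
  have hv_dist : ∀ n, ∀ w ∈ (N : Set E), 1 ≤ dist (v n) w := by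
    intro n w hw
    have hmem : y n + (d n : ℂ) • w ∈ (N : Set E) := N.add_mem (hyN n) (N.smul_mem _ hw)
    have h1 : d n ≤ ‖x n - (y n + (d n : ℂ) • w)‖ := by
      rw [← dist_eq_norm]
      exact Metric.infDist_le_dist_of_mem hmem
    have h2 : ((d n : ℂ))⁻¹ • (x n - (y n + (d n : ℂ) • w)) = v n - w := by
      show _ = ((d n : ℂ))⁻¹ • (x n - y n) - w
      rw [show x n - (y n + (d n : ℂ) • w) = (x n - y n) - (d n : ℂ) • w by abel,
        smul_sub, inv_smul_smul₀ (hdne n)]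
    rw [dist_eq_norm, ← h2, norm_smul, hnormc]
    rw [le_inv_mul_iff₀ (hd_pos n), mul_one]
    exact h1
  have hSv : ∀ n, ‖S (v n)‖ ≤ ((n : ℝ) + 1)⁻¹ := by
    intro n
    have hSy : S (y n) = 0 := LinearMap.mem_ker.1 (hyN n)
    have h3 : S (v n) = ((d n : ℂ))⁻¹ • S (x n) := by
      show S (((d n : ℂ))⁻¹ • (x n - y n)) = _
      rw [map_smul, map_sub, hSy, sub_zero]
    rw [h3, norm_smul, hnormc]
    have h4 := (hxd n).le
    calc (d n)⁻¹ * ‖S (x n)‖ ≤ (d n)⁻¹ * (((n : ℝ) + 1)⁻¹ * d n) :=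
          mul_le_mul_of_nonneg_left h4 (inv_nonneg.2 (hd_pos n).le)
      _ = ((n : ℝ) + 1)⁻¹ := by
          rw [mul_comm (((n : ℝ) + 1)⁻¹), ← mul_assoc, inv_mul_cancel₀ (hd_pos n).ne', one_mul]
  -- extract convergent subsequence of `T ∘ v`
  have hKc : IsCompact (closure (T '' Metric.closedBall 0 2)) :=
    hT.isCompact_closure_image_closedBall (𝕜₁ := ℂ) 2
  have hmem : ∀ n, T (v n) ∈ closure (T '' Metric.closedBall 0 2) := fun n =>
    subset_closure (mem_image_of_mem T (mem_closedBall_zero_iff.2 (hv_norm n)))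
  obtain ⟨z, -, φ, hφ, hz⟩ := hKc.tendsto_subseq hmem
  have hS0 : Tendsto (fun n => S (v (φ n))) atTop (nhds 0) := by
    have hb : ∀ n : ℕ, ‖S (v (φ n))‖ ≤ ((n : ℝ) + 1)⁻¹ := by
      intro n
      refine (hSv (φ n)).trans ?_
      have h1 : (n : ℝ) + 1 ≤ (φ n : ℝ) + 1 := by
        have h0 : (n : ℝ) ≤ (φ n : ℝ) := by exact_mod_cast hφ.le_apply
        linarith
      gcongr
    exact squeeze_zero_norm hb
      (by simpa only [one_div] using tendsto_one_div_add_atTop_nhds_zero_nat (𝕜 := ℝ))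
  have hrepr : ∀ m, v m = lam⁻¹ • (T (v m) - S (v m)) := by
    intro m
    have h5 : S (v m) = T (v m) - lam • (v m) := by
      rw [hSdef]; simp
    rw [h5, sub_sub_cancel, inv_smul_smul₀ hlam]
  have hv_lim : Tendsto (fun n => v (φ n)) atTop (nhds (lam⁻¹ • z)) := by
    have h1 : Tendsto (fun n => lam⁻¹ • (T (v (φ n)) - S (v (φ n)))) atTop
        (nhds (lam⁻¹ • (z - 0))) := (hz.sub hS0).const_smul lam⁻¹
    rw [sub_zero] at h1
    exact h1.congr fun n => (hrepr (φ n)).symm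
  have hx0 : lam⁻¹ • z ∈ (N : Set E) := by
    have h1 : Tendsto (fun n => S (v (φ n))) atTop (nhds (S (lam⁻¹ • z))) :=
      (S.continuous.tendsto _).comp hv_lim
    have h2 : S (lam⁻¹ • z) = 0 := tendsto_nhds_unique h1 hS0
    exact LinearMap.mem_ker.2 h2
  have hdist0 : Tendsto (fun n => dist (v (φ n)) (lam⁻¹ • z)) atTop (nhds 0) :=
    tendsto_iff_dist_tendsto_zero.1 hv_lim
  have hcontra : (1 : ℝ) ≤ 0 := ge_of_tendsto hdist0 (Filter.Eventually.of_forall fun n =>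
    hv_dist (φ n) _ hx0)
  linarith

end Aux

/-- If `T` is a compact operator on a complex Banach space `E` and `λ ≠ 0`, then
`ker (T - λ)` is finite dimensional and `range (T - λ)` is closed in `E`. -/
theorem compact_operator_ker_finiteDimensional_and_range_closed
    {E : Type*} [NormedAddCommGroup E] [NormedSpace ℂ E] [CompleteSpace E]
    (T : E →L[ℂ] E) (hT : IsCompactOperator T) (lam : ℂ) (hlam : lam ≠ 0) :
    FiniteDimensional ℂ (LinearMap.ker ((T - lam • ContinuousLinearMap.id ℂ E : E →L[ℂ] E) : E →ₗ[ℂ] E)) ∧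
    IsClosed ((LinearMap.range ((T - lam • ContinuousLinearMap.id ℂ E : E →L[ℂ] E) : E →ₗ[ℂ] E) : Submodule ℂ E) : Set E) := by
  refine ⟨aux_ker_fd T hT lam hlam, ?_⟩
  set S : E →L[ℂ] E := T - lam • ContinuousLinearMap.id ℂ E with hSdef
  set N : Submodule ℂ E := LinearMap.ker (S : E →ₗ[ℂ] E) with hNdef
  obtain ⟨c, hc, hbound⟩ := aux_bound T hT lam hlam
  haveI hNclosed : IsClosed (N : Set E) := ContinuousLinearMap.isClosed_ker S
  -- the induced map on the quotient
  set g : (E ⧸ N) →ₗ[ℂ] E := N.liftQ (S : E →ₗ[ℂ] E) (le_refl _) with hgdef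
  have hgmk : ∀ m : E, g (Submodule.Quotient.mk m) = S m := fun m => rfl
  have hgb : ∀ q : E ⧸ N, ‖g q‖ ≤ ‖S‖ * ‖q‖ := by
    intro q
    refine le_of_forall_pos_le_add fun ε hε => ?_
    obtain ⟨m, rfl, hm⟩ := Submodule.Quotient.norm_mk_lt q
      (show (0 : ℝ) < ε / (‖S‖ + 1) by positivity)
    have h1 : ‖S m‖ ≤ ‖S‖ * ‖m‖ := S.le_opNorm m
    have h3 : ‖S‖ * (ε / (‖S‖ + 1)) ≤ ε := by
      rw [mul_div_assoc', div_le_iff₀ (by positivity)]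
      nlinarith [norm_nonneg S, hε.le]
    rw [hgmk]
    nlinarith [norm_nonneg S, norm_nonneg m,
      mul_le_mul_of_nonneg_left hm.le (norm_nonneg S)]
  set G : (E ⧸ N) →L[ℂ] E := g.mkContinuous ‖S‖ hgb with hGdef
  have hGmk : ∀ m : E, G (Submodule.Quotient.mk m) = S m := fun m => rfl
  -- G is bounded below
  have hlow : ∀ q : E ⧸ N, ‖q‖ ≤ ((⟨c⁻¹, by positivity⟩ : NNReal) : ℝ) * ‖G q‖ := by
    intro q
    obtain ⟨m, rfl⟩ := Submodule.Quotient.mk_surjective N q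
    have hle : ‖(Submodule.Quotient.mk m : E ⧸ N)‖ ≤ infDist m (N : Set E) := by
      haveI : Nonempty (N : Set E) := ⟨⟨0, N.zero_mem⟩⟩
      rw [Metric.infDist_eq_iInf]
      refine le_ciInf fun w => ?_
      rw [dist_eq_norm]
      have hmw : (Submodule.Quotient.mk m : E ⧸ N) = Submodule.Quotient.mk (m - (w : E)) := by
        rw [Submodule.Quotient.mk_sub, (Submodule.Quotient.mk_eq_zero N).2 w.2, sub_zero]
      rw [hmw]
      exact Submodule.Quotient.norm_mk_le N (m - (w : E))
    have h2 : c * infDist m (N : Set E) ≤ ‖S m‖ := hbound m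
    rw [hGmk]
    have hcoe : ((⟨c⁻¹, by positivity⟩ : NNReal) : ℝ) = c⁻¹ := rfl
    rw [hcoe]
    calc ‖(Submodule.Quotient.mk m : E ⧸ N)‖ ≤ infDist m (N : Set E) := hle
      _ ≤ c⁻¹ * ‖S m‖ := by rw [le_inv_mul_iff₀ hc]; exact h2
  have hanti : AntilipschitzWith _ G := ContinuousLinearMap.antilipschitz_of_bound G hlow
  have hclosed : IsClosed (Set.range G) := hanti.isClosed_range G.uniformContinuous
  have hEq : ((LinearMap.range (S : E →ₗ[ℂ] E) : Submodule ℂ E) : Set E) = Set.range G := by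
    ext y
    simp only [SetLike.mem_coe, LinearMap.mem_range, Set.mem_range]
    constructor
    · rintro ⟨m, rfl⟩
      exact ⟨Submodule.Quotient.mk m, hGmk m⟩
    · rintro ⟨q, rfl⟩
      obtain ⟨m, rfl⟩ := Submodule.Quotient.mk_surjective N q
      exact ⟨m, (hGmk m).symm⟩
  rw [hEq]
  exact hclosed
end

section
/- Let E be a complex Banach space and let T : E → E be a compact operator. Then: (i) every nonzero λ in the spectrum σ(T) is an eigenvalue of T, and is also an eigenvalue of the Banach-space adjoint T*; (ii) for every r > 0, the set of eigenvalues λ of T with |λ| > r is finite; consequently (iii) σ(T) is at most countable and its only possible limit point in ℂ is 0. -/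
/-- The Banach-space adjoint (transpose) of a bounded operator, `ρ ↦ ρ ∘ S`,
as a linear map between the continuous dual spaces. -/
noncomputable def banachAdjoint {E F : Type*} [NormedAddCommGroup E] [NormedSpace ℂ E]
    [NormedAddCommGroup F] [NormedSpace ℂ F] (S : E →L[ℂ] F) :
    StrongDual ℂ F →ₗ[ℂ] StrongDual ℂ E where
  toFun ρ := ρ.comp S
  map_add' ρ σ := by ext x; rfl
  map_smul' c ρ := by ext x; rfl

open Metric Filter Set Topology

set_option linter.unusedSectionVars false
set_option maxHeartbeats 1000000

section RieszSchauderAux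

variable {E : Type*} [NormedAddCommGroup E] [NormedSpace ℂ E] [CompleteSpace E]

private lemma riesz_rel (F G : Submodule ℂ E) (hG : IsClosed (G : Set E)) (hGF : G ≤ F)
    (hlt : ∃ x ∈ F, x ∉ G) :
    ∃ x : E, x ∈ F ∧ ‖x‖ = 1 ∧ ∀ y ∈ G, (1:ℝ)/2 ≤ ‖x - y‖ := by
  set G' : Submodule ℂ F := G.comap F.subtype with hG'
  have hG'c : IsClosed (G' : Set F) := hG.preimage continuous_subtype_val
  obtain ⟨x, hxF, hxG⟩ := hlt
  have hex : ∃ z : F, z ∉ G' := ⟨⟨x, hxF⟩, by simpa [hG'] using hxG⟩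
  obtain ⟨x₀, hx₀, hsep⟩ := riesz_lemma hG'c hex (show (1:ℝ)/2 < 1 by norm_num)
  have hx₀0 : (x₀ : E) ≠ 0 := by
    intro h
    apply hx₀
    have : x₀ = 0 := Subtype.ext h
    simp [this]
  have hn : (0:ℝ) < ‖(x₀ : E)‖ := norm_pos_iff.mpr hx₀0
  refine ⟨‖(x₀:E)‖⁻¹ • (x₀ : E), F.smul_mem _ x₀.2, ?_, ?_⟩
  · simp [norm_smul, inv_mul_cancel₀ hn.ne']
  · intro y hy
    have hy' : ((‖(x₀:E)‖ : ℂ) • (⟨y, hGF hy⟩ : F)) ∈ G' := G'.smul_mem _ (by simpa [hG'] using hy)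
    have h2 := hsep _ hy'
    have hnorm : ‖(x₀ : E) - (‖(x₀:E)‖ : ℂ) • y‖ = ‖(x₀:E)‖ * ‖‖(x₀:E)‖⁻¹ • (x₀:E) - y‖ := by
      rw [← norm_smul_of_nonneg hn.le, smul_sub]
      congr 2
      · rw [smul_comm]
        norm_cast
        have hn' : ‖x₀‖ ≠ 0 := hn.ne'
        rw [smul_smul, inv_mul_cancel₀ hn', one_smul]
    have hx₀n : ‖x₀‖ = ‖(x₀:E)‖ := rfl
    have h2' : (1:ℝ)/2 * ‖(x₀:E)‖ ≤ ‖(x₀:E)‖ * ‖‖(x₀:E)‖⁻¹ • (x₀:E) - y‖ := by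
      calc (1:ℝ)/2 * ‖(x₀:E)‖ ≤ ‖x₀ - (‖(x₀:E)‖ : ℂ) • (⟨y, hGF hy⟩ : F)‖ := h2
      _ = ‖(x₀ : E) - (‖(x₀:E)‖ : ℂ) • y‖ := rfl
      _ = _ := hnorm
    nlinarith [hn]

private lemma exists_subseq (T : E →L[ℂ] E) (hT : IsCompactOperator T) (x : ℕ → E)
    (C : ℝ) (hx : ∀ n, ‖x n‖ ≤ C) :
    ∃ φ : ℕ → ℕ, StrictMono φ ∧ ∃ y : E, Tendsto (fun n => T (x (φ n))) atTop (𝓝 y) := by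
  have hK : IsCompact (closure (⇑T '' closedBall 0 (max C 1))) :=
    hT.isCompact_closure_image_closedBall (max C 1)
  have hmem : ∀ n, T (x n) ∈ closure (⇑T '' closedBall 0 (max C 1)) := fun n =>
    subset_closure ⟨x n, by simpa using (hx n).trans (le_max_left _ _), rfl⟩
  obtain ⟨y, -, φ, hφ, hconv⟩ := hK.tendsto_subseq hmem
  exact ⟨φ, hφ, y, hconv⟩

private lemma no_separated_seq (T : E →L[ℂ] E) (hT : IsCompactOperator T) (e : ℕ → E)
    (he : ∀ n, ‖e n‖ = 1) {δ : ℝ} (hδ : 0 < δ)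
    (hsep : ∀ m n, m < n → δ ≤ ‖T (e m) - T (e n)‖) : False := by
  obtain ⟨φ, hφ, y, hconv⟩ := exists_subseq T hT e 1 (fun n => (he n).le)
  have hc : CauchySeq (fun n => T (e (φ n))) := hconv.cauchySeq
  rw [Metric.cauchySeq_iff] at hc
  obtain ⟨N, hN⟩ := hc δ hδ
  have := hN N le_rfl (N + 1) (Nat.le_succ N)
  rw [dist_eq_norm] at this
  exact absurd (hsep (φ N) (φ (N + 1)) (hφ (Nat.lt_succ_self N))) (by linarith [norm_sub_rev (T (e (φ N))) (T (e (φ (N+1)))) ▸ this])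

private lemma bound_below_mod_ker (T : E →L[ℂ] E) (hT : IsCompactOperator T) {lam : ℂ} (hlam : lam ≠ 0) :
    ∃ c : ℝ, 0 < c ∧ ∀ x : E,
      c * infDist x (LinearMap.ker ((T - lam • ContinuousLinearMap.id ℂ E : E →L[ℂ] E) : E →ₗ[ℂ] E) : Set E) ≤
        ‖(T - lam • ContinuousLinearMap.id ℂ E) x‖ := by
  set S := T - lam • ContinuousLinearMap.id ℂ E with hSdef
  have hSapp : ∀ w : E, S w = T w - lam • w := fun w => rfl
  set N := (LinearMap.ker (S : E →ₗ[ℂ] E) : Set E) with hNdef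
  have hN0 : (0 : E) ∈ N := (LinearMap.ker (S : E →ₗ[ℂ] E)).zero_mem
  by_contra hcon
  push_neg at hcon
  choose x hx using fun n : ℕ => hcon (1 / (n + 1) : ℝ) (by positivity)
  have hd : ∀ n, 0 < infDist (x n) N := by
    intro n
    rcases lt_or_ge 0 (infDist (x n) N) with h | h
    · exact h
    · exfalso
      have h0 : infDist (x n) N = 0 := le_antisymm h infDist_nonneg
      have := hx n
      rw [h0] at this
      simp at this
      exact absurd this (not_lt.mpr (norm_nonneg _))
  choose z hz hzd using fun n =>
    (infDist_lt_iff ⟨0, hN0⟩).mp (show infDist (x n) N < 2 * infDist (x n) N by nlinarith [hd n])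
  set u := fun n => x n - z n with hu
  have hu_norm : ∀ n, ‖u n‖ < 2 * infDist (x n) N := fun n => by
    simpa [hu, dist_eq_norm] using hzd n
  have hu_ge : ∀ n, infDist (x n) N ≤ ‖u n‖ := fun n => by
    simpa [dist_eq_norm] using infDist_le_dist_of_mem (hz n)
  have hu_pos : ∀ n, 0 < ‖u n‖ := fun n => lt_of_lt_of_le (hd n) (hu_ge n)
  have hSu : ∀ n, S (u n) = S (x n) := by
    intro n
    have hzker : S (z n) = 0 := LinearMap.mem_ker.mp (hz n)
    simp [hu, map_sub, hzker]
  set v := fun n => ((‖u n‖⁻¹ : ℝ) : ℂ) • u n with hv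
  have hv_norm : ∀ n, ‖v n‖ = 1 := by
    intro n
    simp [hv, norm_smul, abs_of_pos (inv_pos.mpr (hu_pos n)), inv_mul_cancel₀ (hu_pos n).ne']
  have hSv : ∀ n, ‖S (v n)‖ ≤ 1 / (n + 1) := by
    intro n
    have : S (v n) = ((‖u n‖⁻¹ : ℝ) : ℂ) • S (x n) := by rw [hv, map_smul, hSu]
    rw [this, norm_smul]
    have h1 : ‖((‖u n‖⁻¹ : ℝ) : ℂ)‖ = ‖u n‖⁻¹ := by
      simp [abs_of_pos (inv_pos.mpr (hu_pos n))]
    rw [h1]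
    have h2 := (hx n).le
    have h3 := hu_ge n
    have h4 := hu_pos n
    have h5 : (0:ℝ) < 1 / (n+1) := by positivity
    calc ‖u n‖⁻¹ * ‖S (x n)‖ ≤ ‖u n‖⁻¹ * (1 / (n + 1) * infDist (x n) N) := by
          exact mul_le_mul_of_nonneg_left h2 (inv_nonneg.mpr h4.le)
    _ ≤ 1 / (n + 1) := by
          rw [mul_comm (1 / (n+1 : ℝ)) _, ← mul_assoc]
          have : ‖u n‖⁻¹ * infDist (x n) N ≤ 1 := by
            rw [inv_mul_le_iff₀ h4, mul_one]; exact h3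
          nlinarith
  have hv_sep : ∀ n, ∀ w ∈ N, (1:ℝ)/2 ≤ ‖v n - w‖ := by
    intro n w hw
    have hkey : v n - w = ((‖u n‖⁻¹ : ℝ) : ℂ) • (x n - (z n + ((‖u n‖ : ℝ) : ℂ) • w)) := by
      have hcd : ((‖u n‖⁻¹ : ℝ) : ℂ) * ((‖u n‖ : ℝ) : ℂ) = 1 := by
        norm_cast
        exact inv_mul_cancel₀ (hu_pos n).ne'
      simp only [hv, smul_sub, smul_add, smul_smul, hcd, one_smul]
      simp only [hu, smul_sub]
      abel
    have hmem : z n + ((‖u n‖ : ℝ) : ℂ) • w ∈ N :=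
      (LinearMap.ker (S : E →ₗ[ℂ] E)).add_mem (hz n) ((LinearMap.ker (S : E →ₗ[ℂ] E)).smul_mem _ hw)
    have hge : infDist (x n) N ≤ ‖x n - (z n + ((‖u n‖ : ℝ) : ℂ) • w)‖ := by
      simpa [dist_eq_norm] using infDist_le_dist_of_mem hmem
    rw [hkey, norm_smul]
    have h1 : ‖((‖u n‖⁻¹ : ℝ) : ℂ)‖ = ‖u n‖⁻¹ := by
      simp [abs_of_pos (inv_pos.mpr (hu_pos n))]
    rw [h1]
    have h4 := hu_pos n
    have h5 := hu_norm n
    have h6 := hd n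
    calc (1:ℝ)/2 ≤ ‖u n‖⁻¹ * infDist (x n) N := by
          rw [le_inv_mul_iff₀ h4]; nlinarith
    _ ≤ _ := mul_le_mul_of_nonneg_left hge (inv_nonneg.mpr h4.le)
  obtain ⟨φ, hφ, y, hconv⟩ := exists_subseq T hT v 1 (fun n => (hv_norm n).le)
  have hS0 : Tendsto (fun n => S (v (φ n))) atTop (𝓝 0) := by
    have hb : Tendsto (fun n : ℕ => 1 / ((n : ℝ) + 1)) atTop (𝓝 0) :=
      tendsto_one_div_add_atTop_nhds_zero_nat
    refine squeeze_zero_norm (fun n => le_trans (hSv (φ n)) ?_) hb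
    have h1 : (n : ℝ) + 1 ≤ (φ n : ℝ) + 1 := by
      have : n ≤ φ n := hφ.le_apply
      exact_mod_cast add_le_add_left (Nat.cast_le.mpr this) 1
    apply one_div_le_one_div_of_le (by positivity) h1
  have hlamv : Tendsto (fun n => lam • v (φ n)) atTop (𝓝 y) := by
    have h := hconv.sub hS0
    rw [sub_zero] at h
    have key : (fun n => T (v (φ n)) - S (v (φ n))) = fun n => lam • v (φ n) := by
      funext n; rw [hSapp]; abel
    rwa [key] at h
  have hvlim : Tendsto (fun n => v (φ n)) atTop (𝓝 (lam⁻¹ • y)) := by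
    have h := hlamv.const_smul lam⁻¹
    simpa [smul_smul, inv_mul_cancel₀ hlam] using h
  have hSw : S (lam⁻¹ • y) = 0 := by
    have h1 : Tendsto (fun n => S (v (φ n))) atTop (𝓝 (S (lam⁻¹ • y))) :=
      (S.continuous.tendsto _).comp hvlim
    exact tendsto_nhds_unique h1 hS0
  have hwN : lam⁻¹ • y ∈ N := LinearMap.mem_ker.mpr hSw
  have hten : Tendsto (fun n => ‖v (φ n) - lam⁻¹ • y‖) atTop (𝓝 0) :=
    (tendsto_iff_norm_sub_tendsto_zero).mp hvlim
  obtain ⟨n, hn⟩ := (hten.eventually (gt_mem_nhds (by norm_num : (0:ℝ) < 1/2))).exists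
  exact absurd (hv_sep (φ n) _ hwN) (not_le.mpr hn)

private lemma bound_below_of_inj (T : E →L[ℂ] E) (hT : IsCompactOperator T) {lam : ℂ} (hlam : lam ≠ 0)
    (hker : LinearMap.ker ((T - lam • ContinuousLinearMap.id ℂ E : E →L[ℂ] E) : E →ₗ[ℂ] E) = ⊥) :
    ∃ c : ℝ, 0 < c ∧ ∀ x : E, c * ‖x‖ ≤ ‖(T - lam • ContinuousLinearMap.id ℂ E) x‖ := by
  obtain ⟨c, hc, hbd⟩ := bound_below_mod_ker T hT hlam
  refine ⟨c, hc, fun x => ?_⟩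
  have := hbd x
  rwa [hker, Submodule.bot_coe, infDist_singleton, dist_zero_right] at this

private lemma isClosedMap_of_inj (T : E →L[ℂ] E) (hT : IsCompactOperator T) {lam : ℂ} (hlam : lam ≠ 0)
    (hker : LinearMap.ker ((T - lam • ContinuousLinearMap.id ℂ E : E →L[ℂ] E) : E →ₗ[ℂ] E) = ⊥) :
    IsClosedMap (T - lam • ContinuousLinearMap.id ℂ E) := by
  obtain ⟨c, hc, hbd⟩ := bound_below_of_inj T hT hlam hker
  set S := T - lam • ContinuousLinearMap.id ℂ E
  have hanti : AntilipschitzWith (⟨c, hc.le⟩ : NNReal)⁻¹ S := by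
    apply S.antilipschitz_of_bound
    intro x
    change ‖x‖ ≤ c⁻¹ * ‖S x‖
    rw [← inv_mul_le_iff₀ (inv_pos.mpr hc)]
    simpa [mul_comm] using hbd x
  exact (hanti.isClosedEmbedding S.uniformContinuous).isClosedMap

private lemma isClosed_range' (T : E →L[ℂ] E) (hT : IsCompactOperator T) {lam : ℂ} (hlam : lam ≠ 0) :
    IsClosed (LinearMap.range ((T - lam • ContinuousLinearMap.id ℂ E : E →L[ℂ] E) : E →ₗ[ℂ] E) : Set E) := by
  obtain ⟨c, hc, hbd⟩ := bound_below_mod_ker T hT hlam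
  set S := T - lam • ContinuousLinearMap.id ℂ E with hSdef
  set N := (LinearMap.ker (S : E →ₗ[ℂ] E) : Set E) with hNdef
  have hN0 : (0 : E) ∈ N := (LinearMap.ker (S : E →ₗ[ℂ] E)).zero_mem
  apply isClosed_of_closure_subset
  intro y hy
  rw [Metric.mem_closure_iff] at hy
  -- pick u n with ‖S (u n) - y‖ < c * 2⁻ⁿ / 4
  have hch : ∀ n : ℕ, ∃ u : E, ‖S u - y‖ < c * (1/2)^n / 4 := by
    intro n
    obtain ⟨b, hb, hby⟩ := hy (c * (1/2)^n / 4) (by positivity)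
    obtain ⟨u, hu⟩ := hb
    rw [dist_comm, dist_eq_norm, ← hu] at hby
    exact ⟨u, hby⟩
  choose u hu using hch
  have hSdiff : ∀ n : ℕ, ‖S (u (n+1)) - S (u n)‖ < c * (1/2)^n := by
    intro n
    have h1 := hu (n+1)
    have h2 := hu n
    have : ‖S (u (n+1)) - S (u n)‖ ≤ ‖S (u (n+1)) - y‖ + ‖S (u n) - y‖ := by
      have := norm_sub_le (S (u (n+1)) - y) (S (u n) - y)
      simpa [sub_sub_sub_cancel_right] using this
    have hp : (0:ℝ) < (1/2:ℝ)^n := by positivity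
    calc ‖S (u (n+1)) - S (u n)‖ ≤ ‖S (u (n+1)) - y‖ + ‖S (u n) - y‖ := this
    _ < c * (1/2)^(n+1) / 4 + c * (1/2)^n / 4 := by exact add_lt_add h1 h2
    _ ≤ c * (1/2)^n := by rw [pow_succ]; nlinarith
  have hinf : ∀ n : ℕ, infDist (u (n+1) - u n) N < (1/2)^n := by
    intro n
    have h1 := hbd (u (n+1) - u n)
    rw [map_sub] at h1
    have h2 := (hSdiff n).trans_le' h1
    have hp : (0:ℝ) < (1/2:ℝ)^n := by positivity
    nlinarith [h2]
  choose w hw hwd using fun n => (infDist_lt_iff ⟨0, hN0⟩).mp (hinf n)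
  set v := fun n => u n - ∑ i ∈ Finset.range n, w i with hv
  have hvdiff : ∀ n : ℕ, dist (v n) (v (n+1)) ≤ 1 * (1/2)^n := by
    intro n
    rw [dist_eq_norm, one_mul]
    have : v n - v (n+1) = -(u (n+1) - u n - w n) := by
      simp only [hv, Finset.sum_range_succ]
      abel
    rw [this, norm_neg]
    have h := hwd n
    rw [dist_eq_norm] at h
    exact h.le
  have hcauchy : CauchySeq v := cauchySeq_of_le_geometric (1/2) 1 (by norm_num) hvdiff
  obtain ⟨xlim, hxlim⟩ := cauchySeq_tendsto_of_complete hcauchy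
  have hSv : ∀ n, S (v n) = S (u n) := by
    intro n
    simp only [hv, map_sub]
    have : S (∑ i ∈ Finset.range n, w i) = 0 := by
      rw [map_sum]
      apply Finset.sum_eq_zero
      intro i _
      exact LinearMap.mem_ker.mp (hw i)
    rw [this, sub_zero]
  have hSy : Tendsto (fun n => S (v n)) atTop (𝓝 y) := by
    have h2 : Tendsto (fun n => S (u n)) atTop (𝓝 y) := by
      rw [tendsto_iff_norm_sub_tendsto_zero]
      have hg : Tendsto (fun n : ℕ => c * (1/2:ℝ)^n / 4) atTop (𝓝 0) := by
        have hp := tendsto_pow_atTop_nhds_zero_of_lt_one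
          (by norm_num : (0:ℝ) ≤ 1/2) (by norm_num : (1:ℝ)/2 < 1)
        have h3 := hp.mul_const (c/4)
        rw [zero_mul] at h3
        have heq2 : (fun n : ℕ => c * (1/2:ℝ)^n / 4) = fun n => (1/2:ℝ)^n * (c/4) := by
          funext n; ring
        rwa [heq2]
      exact squeeze_zero (fun n => norm_nonneg _) (fun n => (hu n).le) hg
    simp only [hSv]
    exact h2
  have hSx : Tendsto (fun n => S (v n)) atTop (𝓝 (S xlim)) := (S.continuous.tendsto _).comp hxlim
  have : y = S xlim := tendsto_nhds_unique hSy hSx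
  exact ⟨xlim, this.symm⟩

private lemma surj_of_inj (T : E →L[ℂ] E) (hT : IsCompactOperator T) {lam : ℂ} (hlam : lam ≠ 0)
    (hker : LinearMap.ker ((T - lam • ContinuousLinearMap.id ℂ E : E →L[ℂ] E) : E →ₗ[ℂ] E) = ⊥) :
    LinearMap.range ((T - lam • ContinuousLinearMap.id ℂ E : E →L[ℂ] E) : E →ₗ[ℂ] E) = ⊤ := by
  set S := T - lam • ContinuousLinearMap.id ℂ E with hSdef
  have hSapp : ∀ w : E, S w = T w - lam • w := fun w => rfl
  have hTapp : ∀ w : E, T w = lam • w + S w := fun w => by rw [hSapp]; abel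
  by_contra hsur
  have hinj : Function.Injective ⇑S := by
    exact LinearMap.ker_eq_bot.mp hker
  have hclosedmap : IsClosedMap ⇑S := isClosedMap_of_inj T hT hlam hker
  set F : ℕ → Submodule ℂ E := fun n => Nat.rec ⊤ (fun _ p => Submodule.map (S : E →ₗ[ℂ] E) p) n with hF
  have hFs : ∀ n, F (n + 1) = (F n).map (S : E →ₗ[ℂ] E) := fun n => rfl
  have hclosed : ∀ n, IsClosed (F n : Set E) := by
    intro n
    induction n with
    | zero => exact isClosed_univ
    | succ n ih =>
      rw [hFs, Submodule.map_coe]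
      exact hclosedmap _ ih
  have hanti : ∀ n, F (n + 1) ≤ F n := by
    intro n
    induction n with
    | zero => exact le_top
    | succ n ih => exact Submodule.map_mono ih
  have hmono : Antitone F := antitone_nat_of_succ_le hanti
  have hne : ∀ n, F (n + 1) ≠ F n := by
    intro n
    induction n with
    | zero =>
      intro h
      have h' : LinearMap.range (S : E →ₗ[ℂ] E) = (⊤ : Submodule ℂ E) := by
        rw [← Submodule.map_top (S : E →ₗ[ℂ] E)]
        exact h
      exact hsur h'
    | succ n ih =>
      intro h
      have h' : Submodule.map (S : E →ₗ[ℂ] E) (F (n + 1)) = Submodule.map (S : E →ₗ[ℂ] E) (F n) := h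
      exact ih (Submodule.map_injective_of_injective hinj h')
  have hlt : ∀ n, F (n + 1) < F n := fun n => lt_of_le_of_ne (hanti n) (hne n)
  choose e heF hen hesep using fun n =>
    riesz_rel (F n) (F (n + 1)) (hclosed (n + 1)) (hanti n) (SetLike.exists_of_lt (hlt n))
  have hTF : ∀ k (x : E), x ∈ F k → T x ∈ F k := by
    intro k x hx
    rw [hTapp]
    refine (F k).add_mem ((F k).smul_mem _ hx) (hanti k ?_)
    rw [hFs]
    exact Submodule.mem_map_of_mem hx
  refine no_separated_seq T hT e hen (δ := ‖lam‖ / 2)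
    (half_pos (norm_pos_iff.mpr hlam)) ?_
  intro m n hmn
  have hw : S (e m) - T (e n) ∈ F (m + 1) := by
    refine (F (m + 1)).sub_mem ?_ (hmono (Nat.succ_le_of_lt hmn) (hTF n _ (heF n)))
    rw [hFs]
    exact Submodule.mem_map_of_mem (heF m)
  set w : E := (-(lam⁻¹)) • (S (e m) - T (e n)) with hwdef
  have hwF : w ∈ F (m + 1) := (F (m + 1)).smul_mem _ hw
  have hlw : lam • w = -(S (e m) - T (e n)) := by
    rw [hwdef, smul_smul, mul_neg, mul_inv_cancel₀ hlam, neg_smul, one_smul]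
  have hkey : T (e m) - T (e n) = lam • (e m - w) := by
    rw [smul_sub, hlw, hTapp (e m)]
    abel
  have hs := hesep m w hwF
  calc ‖lam‖ / 2 = ‖lam‖ * (1 / 2) := by ring
  _ ≤ ‖lam‖ * ‖e m - w‖ := mul_le_mul_of_nonneg_left hs (norm_nonneg lam)
  _ = ‖lam • (e m - w)‖ := (norm_smul lam _).symm
  _ = ‖T (e m) - T (e n)‖ := by rw [hkey]

private lemma inj_of_surj (T : E →L[ℂ] E) (hT : IsCompactOperator T) {lam : ℂ} (hlam : lam ≠ 0)
    (hsur : LinearMap.range ((T - lam • ContinuousLinearMap.id ℂ E : E →L[ℂ] E) : E →ₗ[ℂ] E) = ⊤) :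
    LinearMap.ker ((T - lam • ContinuousLinearMap.id ℂ E : E →L[ℂ] E) : E →ₗ[ℂ] E) = ⊥ := by
  set S := T - lam • ContinuousLinearMap.id ℂ E with hSdef
  have hSapp : ∀ w : E, S w = T w - lam • w := fun w => rfl
  have hTapp : ∀ w : E, T w = lam • w + S w := fun w => by rw [hSapp]; abel
  by_contra hker
  have hsurj : Function.Surjective ⇑S := by
    exact LinearMap.range_eq_top.mp hsur
  set G : ℕ → Submodule ℂ E := fun n => Nat.rec ⊥ (fun _ p => Submodule.comap (S : E →ₗ[ℂ] E) p) n with hG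
  have hGs : ∀ n, G (n + 1) = (G n).comap (S : E →ₗ[ℂ] E) := fun n => rfl
  have hclosed : ∀ n, IsClosed (G n : Set E) := by
    intro n
    induction n with
    | zero =>
      have : ((⊥ : Submodule ℂ E) : Set E) = {0} := Submodule.bot_coe
      rw [show G 0 = ⊥ from rfl, this]
      exact isClosed_singleton
    | succ n ih =>
      rw [hGs, Submodule.comap_coe]
      exact ih.preimage S.continuous
  have hmono1 : ∀ n, G n ≤ G (n + 1) := by
    intro n
    induction n with
    | zero => exact bot_le
    | succ n ih => exact Submodule.comap_mono ih
  have hmono : Monotone G := monotone_nat_of_le_succ hmono1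
  have hne : ∀ n, G n ≠ G (n + 1) := by
    intro n
    induction n with
    | zero =>
      intro h
      have h' : (⊥ : Submodule ℂ E) = LinearMap.ker (S : E →ₗ[ℂ] E) := by
        rw [← Submodule.comap_bot (S : E →ₗ[ℂ] E)]
        exact h
      exact hker h'.symm
    | succ n ih =>
      intro h
      have h' : Submodule.comap (S : E →ₗ[ℂ] E) (G n) = Submodule.comap (S : E →ₗ[ℂ] E) (G (n + 1)) := h
      have h2 := congrArg (Submodule.map (S : E →ₗ[ℂ] E)) h'
      rw [Submodule.map_comap_eq_of_surjective hsurj, Submodule.map_comap_eq_of_surjective hsurj]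
        at h2
      exact ih h2
  have hlt : ∀ n, G n < G (n + 1) := fun n => lt_of_le_of_ne (hmono1 n) (hne n)
  choose e heG hen hesep using fun n =>
    riesz_rel (G (n + 1)) (G n) (hclosed n) (hmono1 n) (SetLike.exists_of_lt (hlt n))
  have hTG : ∀ k (x : E), x ∈ G (k + 1) → T x ∈ G (k + 1) := by
    intro k x hx
    rw [hTapp]
    refine (G (k + 1)).add_mem ((G (k + 1)).smul_mem _ hx) (hmono1 k ?_)
    rw [hGs] at hx
    exact hx
  refine no_separated_seq T hT e hen (δ := ‖lam‖ / 2)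
    (half_pos (norm_pos_iff.mpr hlam)) ?_
  intro m n hmn
  -- separate T (e n) - T (e m), with e n ∈ G (n+1), dist from G n ≥ 1/2
  have hSen : S (e n) ∈ G n := by
    have := heG n
    rw [hGs] at this
    exact this
  have hTem : T (e m) ∈ G n := hmono (Nat.succ_le_of_lt hmn) (hTG m _ (heG m))
  have hw : S (e n) - T (e m) ∈ G n := (G n).sub_mem hSen hTem
  set w : E := (-(lam⁻¹)) • (S (e n) - T (e m)) with hwdef
  have hwG : w ∈ G n := (G n).smul_mem _ hw
  have hlw : lam • w = -(S (e n) - T (e m)) := by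
    rw [hwdef, smul_smul, mul_neg, mul_inv_cancel₀ hlam, neg_smul, one_smul]
  have hkey : T (e n) - T (e m) = lam • (e n - w) := by
    rw [smul_sub, hlw, hTapp (e n)]
    abel
  have hs := hesep n w hwG
  calc ‖lam‖ / 2 = ‖lam‖ * (1 / 2) := by ring
  _ ≤ ‖lam‖ * ‖e n - w‖ := mul_le_mul_of_nonneg_left hs (norm_nonneg lam)
  _ = ‖lam • (e n - w)‖ := (norm_smul lam _).symm
  _ = ‖T (e n) - T (e m)‖ := by rw [hkey]
  _ = ‖T (e m) - T (e n)‖ := norm_sub_rev _ _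

private lemma eigen_finite (T : E →L[ℂ] E) (hT : IsCompactOperator T) {r : ℝ} (hr : 0 < r) :
    {lam : ℂ | LinearMap.ker ((T - lam • ContinuousLinearMap.id ℂ E : E →L[ℂ] E) : E →ₗ[ℂ] E) ≠ ⊥ ∧
      r < ‖lam‖}.Finite := by
  by_contra hinf
  rw [← Set.not_infinite, not_not] at hinf
  set A := {lam : ℂ | LinearMap.ker ((T - lam • ContinuousLinearMap.id ℂ E : E →L[ℂ] E) : E →ₗ[ℂ] E) ≠ ⊥ ∧
      r < ‖lam‖} with hA
  set f := hinf.natEmbedding with hf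
  set lam : ℕ → ℂ := fun n => (f n : ℂ) with hlamdef
  have hlam_inj : Function.Injective lam := fun m n h => by
    have := f.injective (Subtype.ext h)
    exact this
  have hlamA : ∀ n, lam n ∈ A := fun n => (f n).2
  have hlam_ne : ∀ n, lam n ≠ 0 := by
    intro n h
    have := (hlamA n).2
    rw [h] at this
    simp at this
    linarith
  have hlam_r : ∀ n, r < ‖lam n‖ := fun n => (hlamA n).2
  -- eigenvectors
  have hv' : ∀ n, ∃ x ∈ LinearMap.ker ((T - lam n • ContinuousLinearMap.id ℂ E : E →L[ℂ] E) : E →ₗ[ℂ] E), x ≠ 0 := by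
    intro n
    exact Submodule.exists_mem_ne_zero_of_ne_bot (hlamA n).1
  choose v hvker hv0 using hv'
  have hTv : ∀ n, T (v n) = lam n • v n := by
    intro n
    have h := LinearMap.mem_ker.mp (hvker n)
    have h2 : T (v n) - lam n • v n = 0 := h
    rw [sub_eq_zero] at h2
    exact h2
  have heig : ∀ n, Module.End.HasEigenvector (↑T : E →ₗ[ℂ] E) (lam n) (v n) :=
    fun n => ⟨Module.End.mem_eigenspace_iff.mpr (by simpa using hTv n), hv0 n⟩
  have hLI : LinearIndependent ℂ v :=
    Module.End.eigenvectors_linearIndependent' (↑T : E →ₗ[ℂ] E) lam hlam_inj v heig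
  set M : ℕ → Submodule ℂ E := fun n => Submodule.span ℂ (v '' {i | i < n}) with hM
  have hclosed : ∀ n, IsClosed (M n : Set E) := by
    intro n
    have hfin : (v '' {i | i < n}).Finite := (Set.finite_Iio n).image v
    haveI := FiniteDimensional.span_of_finite ℂ hfin
    exact Submodule.closed_of_finiteDimensional _
  have hmono : Monotone M := by
    intro m n hmn
    exact Submodule.span_mono (Set.image_mono (f := v) (fun i hi => lt_of_lt_of_le hi hmn))
  have hnotmem : ∀ n, v n ∉ M n := by
    intro n
    exact hLI.notMem_span_image (by simp)
  have hex : ∀ n, ∃ x ∈ M (n + 1), x ∉ M n := by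
    intro n
    exact ⟨v n, Submodule.subset_span ⟨n, by simp, rfl⟩, hnotmem n⟩
  choose e heM hen hesep using fun n =>
    riesz_rel (M (n + 1)) (M n) (hclosed n) (hmono (Nat.le_succ n)) (hex n)
  have hTM : ∀ k (x : E), x ∈ M k → T x ∈ M k := by
    intro k x hx
    have h1 : T x ∈ Submodule.span ℂ (⇑T '' (v '' {i | i < k})) :=
      Submodule.apply_mem_span_image_of_mem_span (T : E →ₗ[ℂ] E) hx
    refine Submodule.span_le.mpr ?_ h1
    rintro y ⟨w, ⟨i, hi, rfl⟩, rfl⟩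
    rw [hTv i]
    exact (M k).smul_mem _ (Submodule.subset_span ⟨i, hi, rfl⟩)
  have hSM : ∀ n (x : E), x ∈ M (n + 1) → T x - lam n • x ∈ M n := by
    intro n x hx
    set L : E →L[ℂ] E := T - lam n • ContinuousLinearMap.id ℂ E with hL
    have hLx : L x = T x - lam n • x := rfl
    rw [← hLx]
    have h1 : L x ∈ Submodule.span ℂ (⇑L '' (v '' {i | i < n + 1})) :=
      Submodule.apply_mem_span_image_of_mem_span (L : E →ₗ[ℂ] E) hx
    refine Submodule.span_le.mpr ?_ h1
    rintro y ⟨w, ⟨i, hi, rfl⟩, rfl⟩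
    have hLv : L (v i) = (lam i - lam n) • v i := by
      have : L (v i) = T (v i) - lam n • v i := rfl
      rw [this, hTv i, ← sub_smul]
    rw [hLv]
    rcases Nat.lt_succ_iff_lt_or_eq.mp hi with hi' | rfl
    · exact (M n).smul_mem _ (Submodule.subset_span ⟨i, hi', rfl⟩)
    · simp
  refine no_separated_seq T hT e hen (δ := r / 2) (by positivity) ?_
  intro m n hmn
  have hSen : T (e n) - lam n • e n ∈ M n := hSM n _ (heM n)
  have hTem : T (e m) ∈ M n := hmono (Nat.succ_le_of_lt hmn) (hTM (m + 1) _ (heM m))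
  have hw : (T (e n) - lam n • e n) - T (e m) ∈ M n := (M n).sub_mem hSen hTem
  set w : E := (-(lam n)⁻¹) • ((T (e n) - lam n • e n) - T (e m)) with hwdef
  have hwM : w ∈ M n := (M n).smul_mem _ hw
  have hlw : lam n • w = -((T (e n) - lam n • e n) - T (e m)) := by
    rw [hwdef, smul_smul, mul_neg, mul_inv_cancel₀ (hlam_ne n), neg_smul, one_smul]
  have hkey : T (e n) - T (e m) = lam n • (e n - w) := by
    rw [smul_sub, hlw]
    abel
  have hs := hesep n w hwM
  have habs : ‖lam n‖ = ‖lam n‖ := rfl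
  calc r / 2 = r * (1 / 2) := by ring
  _ ≤ ‖lam n‖ * ‖e n - w‖ := by
      rw [habs]
      exact mul_le_mul (hlam_r n).le hs (by norm_num) (norm_nonneg _)
  _ = ‖lam n • (e n - w)‖ := (norm_smul (lam n) _).symm
  _ = ‖T (e n) - T (e m)‖ := by rw [hkey]
  _ = ‖T (e m) - T (e n)‖ := norm_sub_rev _ _

private lemma ker_ne_bot_of_mem_spectrum (T : E →L[ℂ] E) (hT : IsCompactOperator T) {lam : ℂ}
    (hmem : lam ∈ spectrum ℂ T) (hlam : lam ≠ 0) :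
    LinearMap.ker ((T - lam • ContinuousLinearMap.id ℂ E : E →L[ℂ] E) : E →ₗ[ℂ] E) ≠ ⊥ := by
  intro hker
  set S := T - lam • ContinuousLinearMap.id ℂ E with hSdef
  have hsurj : LinearMap.range (S : E →ₗ[ℂ] E) = ⊤ := surj_of_inj T hT hlam hker
  have hbij : Function.Bijective ⇑S :=
    ⟨LinearMap.ker_eq_bot.mp hker, LinearMap.range_eq_top.mp hsurj⟩
  have hunit : IsUnit S := ContinuousLinearMap.isUnit_iff_bijective.mpr hbij
  have heq : algebraMap ℂ (E →L[ℂ] E) lam - T = -S := by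
    rw [hSdef, Algebra.algebraMap_eq_smul_one]
    rw [ContinuousLinearMap.one_def]
    abel
  exact (spectrum.notMem_iff.mpr (heq ▸ hunit.neg)) hmem

private lemma adj_ker_ne_bot (T : E →L[ℂ] E) (hT : IsCompactOperator T) {lam : ℂ}
    (hmem : lam ∈ spectrum ℂ T) (hlam : lam ≠ 0) :
    LinearMap.ker (banachAdjoint (T - lam • ContinuousLinearMap.id ℂ E)) ≠ ⊥ := by
  set S := T - lam • ContinuousLinearMap.id ℂ E with hSdef
  have hker : LinearMap.ker (S : E →ₗ[ℂ] E) ≠ ⊥ := ker_ne_bot_of_mem_spectrum T hT hmem hlam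
  have hnsurj : LinearMap.range (S : E →ₗ[ℂ] E) ≠ ⊤ := fun h => hker (inj_of_surj T hT hlam h)
  set R : Submodule ℂ E := LinearMap.range (S : E →ₗ[ℂ] E) with hR
  haveI hRc : IsClosed (R : Set E) := isClosed_range' T hT hlam
  obtain ⟨x, -, hx⟩ := SetLike.exists_of_lt (show R < ⊤ from lt_top_iff_ne_top.mpr hnsurj)
  set Q := E ⧸ R
  have hxq : (Submodule.Quotient.mk x : Q) ≠ 0 := by
    rw [ne_eq, Submodule.Quotient.mk_eq_zero]
    exact hx
  obtain ⟨g, -, hgx⟩ := exists_dual_vector ℂ (Submodule.Quotient.mk x : Q) (norm_ne_zero_iff.mpr hxq)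
  set mkC : E →L[ℂ] Q :=
    LinearMap.mkContinuous R.mkQ 1 (fun m => by
      rw [one_mul]; exact Submodule.Quotient.norm_mk_le R m) with hmkC
  set ρ : StrongDual ℂ E := g.comp mkC with hρ
  have hρS : banachAdjoint S ρ = 0 := by
    ext y
    have hySR : S y ∈ R := LinearMap.mem_range_self (S : E →ₗ[ℂ] E) y
    have : (Submodule.Quotient.mk (S y) : Q) = 0 := (Submodule.Quotient.mk_eq_zero R).mpr hySR
    show g (Submodule.Quotient.mk (S y)) = 0
    rw [this, map_zero]
  have hρ0 : ρ ≠ 0 := by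
    intro h
    have h1 : ρ x = 0 := by rw [h]; rfl
    have h2 : ρ x = g (Submodule.Quotient.mk x) := rfl
    rw [h2, hgx] at h1
    rw [RCLike.ofReal_eq_zero, norm_eq_zero] at h1
    exact hxq h1
  intro hbot
  have : ρ ∈ LinearMap.ker (banachAdjoint S) := LinearMap.mem_ker.mpr hρS
  rw [hbot, Submodule.mem_bot] at this
  exact hρ0 this

end RieszSchauderAux

/-- For a compact operator `T` on a complex Banach space `E`:
(i) every nonzero `λ` in the spectrum of `T` is an eigenvalue of `T` and of the
Banach-space adjoint `T*`;
(ii) for every `r > 0`, the set of eigenvalues `λ` of `T` with `|λ| > r` is finite;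
(iii) the spectrum of `T` is countable and its only possible accumulation point in `ℂ`
is `0`. -/
theorem compact_operator_spectrum
    {E : Type*} [NormedAddCommGroup E] [NormedSpace ℂ E] [CompleteSpace E]
    (T : E →L[ℂ] E) (hT : IsCompactOperator T) :
    (∀ lam ∈ spectrum ℂ T, lam ≠ 0 →
        LinearMap.ker ((T - lam • ContinuousLinearMap.id ℂ E : E →L[ℂ] E) : E →ₗ[ℂ] E) ≠ ⊥ ∧
        LinearMap.ker (banachAdjoint (T - lam • ContinuousLinearMap.id ℂ E)) ≠ ⊥) ∧
    (∀ r : ℝ, 0 < r →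
        {lam : ℂ | LinearMap.ker ((T - lam • ContinuousLinearMap.id ℂ E : E →L[ℂ] E) : E →ₗ[ℂ] E) ≠ ⊥ ∧
          r < ‖lam‖}.Finite) ∧
    (spectrum ℂ T).Countable ∧
    (∀ z : ℂ, z ≠ 0 → ¬ AccPt z (Filter.principal (spectrum ℂ T))) := by
  refine ⟨fun lam hmem hlam =>
      ⟨ker_ne_bot_of_mem_spectrum T hT hmem hlam, adj_ker_ne_bot T hT hmem hlam⟩,
    fun r hr => eigen_finite T hT hr, ?_, ?_⟩
  · have hsub : spectrum ℂ T ⊆ insert 0 (⋃ n : ℕ,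
        {lam : ℂ | LinearMap.ker ((T - lam • ContinuousLinearMap.id ℂ E : E →L[ℂ] E) : E →ₗ[ℂ] E) ≠ ⊥ ∧
          1 / ((n : ℝ) + 1) < ‖lam‖}) := by
      intro lam hmem
      by_cases h0 : lam = 0
      · exact Set.mem_insert_iff.mpr (Or.inl h0)
      · have habs : 0 < ‖lam‖ := norm_pos_iff.mpr h0
        obtain ⟨n, hn⟩ := exists_nat_one_div_lt habs
        exact Set.mem_insert_iff.mpr (Or.inr (Set.mem_iUnion.mpr
          ⟨n, ker_ne_bot_of_mem_spectrum T hT hmem h0, hn⟩))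
    refine Set.Countable.mono hsub ?_
    exact Set.Countable.insert 0 (Set.countable_iUnion fun n =>
      (eigen_finite T hT (by positivity : (0:ℝ) < 1 / ((n : ℝ) + 1))).countable)
  · intro z hz hacc
    set r := ‖z‖ / 2 with hrdef
    have habs : 0 < ‖z‖ := norm_pos_iff.mpr hz
    have hrpos : 0 < r := by positivity
    set U := {w : ℂ | r < ‖w‖} with hU
    have hUopen : IsOpen U := isOpen_lt continuous_const continuous_norm
    have hzU : z ∈ U := by
      simp only [hU, Set.mem_setOf_eq, hrdef]
      linarith
    have hfin : ((spectrum ℂ T ∩ U) \ {z}).Finite := by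
      refine ((eigen_finite T hT hrpos).subset ?_).subset (Set.diff_subset)
      rintro w ⟨hwσ, hwU⟩
      have hw0 : w ≠ 0 := by
        intro h
        rw [h] at hwU
        simp [hU] at hwU
        linarith
      exact ⟨ker_ne_bot_of_mem_spectrum T hT hwσ hw0, hwU⟩
    have hclosed : IsClosed ((spectrum ℂ T ∩ U) \ {z}) := hfin.isClosed
    set W := U ∩ ((spectrum ℂ T ∩ U) \ {z})ᶜ with hW
    have hWopen : IsOpen W := hUopen.inter hclosed.isOpen_compl
    have hzW : z ∈ W := ⟨hzU, fun h => h.2 rfl⟩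
    rw [accPt_iff_nhds] at hacc
    obtain ⟨y, ⟨⟨hyU, hyc⟩, hyσ⟩, hyz⟩ := hacc W (hWopen.mem_nhds hzW)
    exact hyc ⟨⟨hyσ, hyU⟩, hyz⟩
end

section
/- Let A be a C*-algebra, let B be an involutive complex Banach algebra, and let φ : A → B be an injective algebra homomorphism satisfying φ(a*) = φ(a)* for all a ∈ A. Then ‖φ(a)‖ ≥ ‖a‖ for all a ∈ A. -/
open scoped ENNReal NNReal

set_option maxHeartbeats 1000000
set_option synthInstance.maxHeartbeats 400000

/-- Auxiliary quasi-nilpotence lemma: if `G` is an algebra homomorphism from `C(K, ℂ)`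
into a unital complex Banach algebra, `u, g : C(K, ℂ)` with `‖G u‖ ≤ ρ` and `g` vanishes
at every point where `|u|≤ ρ`, then powers of `G g` tend to zero in norm. -/
theorem aux_quasinilpotent {𝔅 : Type*} [NormedRing 𝔅] [NormedAlgebra ℂ 𝔅] [CompleteSpace 𝔅]
    [NormOneClass 𝔅] {K : Type*} [TopologicalSpace K] [CompactSpace K]
    [T2Space K] (G : C(K, ℂ) →ₐ[ℂ] 𝔅) (u g : C(K, ℂ)) (ρ : ℝ) (hu : ‖G u‖ ≤ ρ)
    (hg : ∀ w : K, ‖u w‖ ≤ ρ → g w = 0) {ε : ℝ} (hε : 0 < ε) :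
    ∃ n : ℕ, n ≠ 0 ∧ ‖(G g) ^ n‖ < ε := by
  set E : Subalgebra ℂ 𝔅 := G.range with hE
  have hEcomm : ∀ y z : E, y * z = z * y := by
    intro y z
    apply Subtype.ext
    rw [MulMemClass.coe_mul, MulMemClass.coe_mul]
    obtain ⟨g₁, h₁⟩ := y.2
    obtain ⟨g₂, h₂⟩ := z.2
    rw [← h₁, ← h₂, ← map_mul, ← map_mul, mul_comm g₁ g₂]
  set D : Subalgebra ℂ 𝔅 := E.topologicalClosure with hD
  letI : CommRing D := E.commRingTopologicalClosure hEcomm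
  letI : CompleteSpace D := (E.isClosed_topologicalClosure).completeSpace_coe
  letI : NormedCommRing D := { (inferInstance : NormedRing D) with mul_comm := mul_comm }
  have hGmem : ∀ p, G p ∈ D := fun p => E.le_topologicalClosure ⟨p, rfl⟩
  -- each character of `D` is given by evaluation at a point of `K` on the image of `G`
  have hchar : ∀ χ : WeakDual.characterSpace ℂ D,
      ∃ w : K, ∀ p : C(K, ℂ), χ ⟨G p, hGmem p⟩ = p w := by
    intro χ
    set θ : C(K, ℂ) →ₐ[ℂ] ℂ :=
      (WeakDual.CharacterSpace.equivAlgHom χ).comp (G.codRestrict D hGmem) with hθ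
    set θc := WeakDual.CharacterSpace.equivAlgHom.symm θ with hθc
    obtain ⟨w, hw⟩ := (WeakDual.CharacterSpace.homeoEval K ℂ).surjective θc
    refine ⟨w, fun p => ?_⟩
    have h3 : θc p = p w := by rw [← hw]; rfl
    rw [hθc, WeakDual.CharacterSpace.equivAlgHom_symm_coe] at h3
    rw [← h3, hθ]
    rfl
  -- every character kills `G g`
  have hnorm1 : ‖(1 : D)‖ = 1 := by
    have h1 : ((1 : D) : 𝔅) = 1 := OneMemClass.coe_one _
    rw [show ‖(1 : D)‖ = ‖((1 : D) : 𝔅)‖ from rfl, h1, norm_one]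
  have hχ0 : ∀ χ : WeakDual.characterSpace ℂ D, χ (⟨G g, hGmem g⟩ : D) = 0 := by
    intro χ
    obtain ⟨w, hw⟩ := hchar χ
    have habsw : ‖u w‖ ≤ ρ := by
      have hb := AlgHom.norm_apply_le_self_mul_norm_one
        (WeakDual.CharacterSpace.equivAlgHom χ) (⟨G u, hGmem u⟩ : D)
      rw [hnorm1, mul_one, WeakDual.CharacterSpace.equivAlgHom_coe, hw u] at hb
      have hDnorm : ‖(⟨G u, hGmem u⟩ : D)‖ = ‖G u‖ := rfl
      rw [hDnorm] at hb
      calc ‖u w‖ = ‖u w‖ := rfl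
        _ ≤ ‖G u‖ := hb
        _ ≤ ρ := hu
    rw [hw g]
    exact hg w habsw
  -- hence the spectral radius of `G g` in `D` is zero
  have hrad : spectralRadius ℂ (⟨G g, hGmem g⟩ : D) = 0 := by
    rw [spectralRadius]
    refine le_antisymm ?_ (zero_le)
    refine iSup₂_le fun z hz => ?_
    obtain ⟨χ, hχ⟩ := WeakDual.CharacterSpace.mem_spectrum_iff_exists.mp hz
    rw [← hχ, hχ0 χ]
    simp
  -- Gelfand's formula
  have htend := spectrum.pow_nnnorm_pow_one_div_tendsto_nhds_spectralRadius
    ((⟨G g, hGmem g⟩ : D))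
  rw [hrad] at htend
  have hεE0 : (0 : ℝ≥0∞) < ENNReal.ofReal ε := by simp [ENNReal.ofReal_pos, hε]
  have hεE0' : (0 : ℝ≥0∞) < min 1 (ENNReal.ofReal ε) := by
    simp [hεE0]
  obtain ⟨n, hn, hn1⟩ :=
    ((htend.eventually_lt_const hεE0').and (Filter.eventually_ge_atTop 1)).exists
  refine ⟨n, by omega, ?_⟩
  have hnR : (0:ℝ) < (n:ℝ) := by exact_mod_cast hn1
  have h4 := ENNReal.rpow_lt_rpow hn hnR
  rw [← ENNReal.rpow_mul, one_div, inv_mul_cancel₀ (ne_of_gt hnR), ENNReal.rpow_one] at h4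
  have h5 : ((‖(⟨G g, hGmem g⟩ : D) ^ n‖₊ : ℝ≥0∞)) < ENNReal.ofReal ε := by
    refine lt_of_lt_of_le h4 ?_
    calc (min 1 (ENNReal.ofReal ε)) ^ (n:ℝ)
        ≤ (min 1 (ENNReal.ofReal ε)) ^ (1:ℝ) :=
          ENNReal.rpow_le_rpow_of_exponent_ge (min_le_left _ _) (by exact_mod_cast hn1)
      _ = min 1 (ENNReal.ofReal ε) := ENNReal.rpow_one _
      _ ≤ ENNReal.ofReal ε := min_le_right _ _
  have hco : ((⟨G g, hGmem g⟩ : D) ^ n : D) = ⟨(G g) ^ n, pow_mem (hGmem g) n⟩ := by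
    apply Subtype.ext
    exact SubmonoidClass.coe_pow _ n
  rw [hco] at h5
  have h6 : ((‖(G g) ^ n‖₊ : ℝ≥0∞)) < ENNReal.ofReal ε := h5
  rw [← enorm_eq_nnnorm, ← ofReal_norm] at h6
  exact (ENNReal.ofReal_lt_ofReal_iff_of_nonneg (norm_nonneg _)).mp h6

/-- An injective star algebra homomorphism from a C*-algebra into an involutive
complex Banach algebra is norm increasing. -/
theorem injective_star_hom_norm_ge {A B : Type*}
    [NonUnitalNormedRing A] [NormedSpace ℂ A] [IsScalarTower ℂ A A] [SMulCommClass ℂ A A]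
    [CompleteSpace A] [StarRing A] [CStarRing A] [StarModule ℂ A]
    [NonUnitalNormedRing B] [NormedSpace ℂ B] [IsScalarTower ℂ B B] [SMulCommClass ℂ B B]
    [CompleteSpace B] [StarRing B] [NormedStarGroup B] [StarModule ℂ B]
    (φ : A →ₙₐ[ℂ] B) (hφ : ∀ a : A, φ (star a) = star (φ a))
    (hinj : Function.Injective φ) :
    ∀ a : A, ‖a‖ ≤ ‖φ a‖ := by
  letI : NonUnitalCStarAlgebra A :=
    { ‹NonUnitalNormedRing A›, ‹StarRing A›, ‹CStarRing A›, ‹CompleteSpace A›,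
      ‹NormedSpace ℂ A›, ‹IsScalarTower ℂ A A›, ‹SMulCommClass ℂ A A›, ‹StarModule ℂ A› with }
  -- dispose of the degenerate case where `B` is trivial
  by_cases hBtriv : Subsingleton B
  · intro a
    have : a = 0 := hinj (Subsingleton.elim _ _)
    simp [this]
  have hBnontriv : Nontrivial B := not_subsingleton_iff_nontrivial.mp hBtriv
  -- the key step : for selfadjoint `x`, `‖x‖ ≤ ‖φ x‖`
  have key : ∀ x : A, IsSelfAdjoint x → ‖x‖ ≤ ‖φ x‖ := by
    intro x hx
    by_contra hcon
    push_neg at hcon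
    set ρ : ℝ := ‖φ x‖ with hρdef
    set R : ℝ := ‖x‖ with hRdef
    have hρ0 : 0 ≤ ρ := norm_nonneg _
    set ρ₂ : ℝ := (ρ + R) / 2 with hρ₂def
    have h1 : ρ < ρ₂ := by rw [hρ₂def]; linarith
    have h2 : ρ₂ < R := by rw [hρ₂def]; linarith
    have hc : (0:ℝ) < ρ₂ - ρ := by linarith
    -- the cut-off functions
    set e : ℂ → ℂ := fun z => ((min 1 ((max 0 (‖z‖ - ρ)) / (ρ₂ - ρ)) : ℝ) : ℂ)
      with hedef
    set f : ℂ → ℂ := fun z => ((max 0 (‖z‖ - ρ₂) : ℝ) : ℂ) with hfdef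
    have hec : Continuous e := by
      apply Complex.continuous_ofReal.comp
      exact continuous_const.min
        ((continuous_const.max (continuous_norm.sub continuous_const)).div_const _)
    have hfc : Continuous f := by
      apply Complex.continuous_ofReal.comp
      exact continuous_const.max (continuous_norm.sub continuous_const)
    have hew : ∀ z : ℂ, ‖z‖ ≤ ρ → e z = 0 := by
      intro z hz
      rw [hedef]
      simp only
      rw [max_eq_left (by linarith), zero_div, min_eq_right zero_le_one]
      simp
    have he0 : e 0 = 0 := hew 0 (by simpa using hρ0)
    have heone : ∀ z : ℂ, ρ₂ ≤ ‖z‖ → e z = 1 := by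
      intro z hz
      rw [hedef]
      simp only
      rw [max_eq_right (by linarith), min_eq_left ((one_le_div hc).mpr (by linarith))]
      simp
    have hfz : ∀ z : ℂ, ‖z‖ ≤ ρ₂ → f z = 0 := by
      intro z hz
      rw [hfdef]
      simp only
      rw [max_eq_left (by linarith)]
      simp
    have hf0 : f 0 = 0 := hfz 0 (by simpa using (by linarith : (0:ℝ) ≤ ρ₂))
    have hfe : ∀ (k : ℕ) (z : ℂ), f z * e z ^ k = f z := by
      intro k z
      by_cases hz : ‖z‖ ≤ ρ₂
      · rw [hfz z hz, zero_mul]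
      · rw [heone z (le_of_lt (not_le.mp hz)), one_pow, mul_one]
    -- setup in the unitization of `A` and operators on `B`
    have hx' : IsSelfAdjoint (x : Unitization ℂ A) := Unitization.isSelfAdjoint_inr.mpr hx
    have hsn : IsStarNormal (x : Unitization ℂ A) := hx'.isStarNormal
    have hsnx : IsStarNormal x := hx.isStarNormal
    set Ψ : Unitization ℂ A →ₐ[ℂ] (B →L[ℂ] B) :=
      Unitization.lift ((NonUnitalAlgHom.Lmul ℂ B).comp φ) with hΨ
    have hΨinr : ∀ b : A, Ψ b = ContinuousLinearMap.mul ℂ B (φ b) := by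
      intro b
      simp [hΨ, Unitization.lift_apply, NonUnitalAlgHom.toAlgHom_apply, NonUnitalAlgHom.coe_Lmul]
    set G : C(spectrum ℂ (x : Unitization ℂ A), ℂ) →ₐ[ℂ] (B →L[ℂ] B) :=
      Ψ.comp (cfcHom hsn : C(spectrum ℂ (x : Unitization ℂ A), ℂ) →⋆ₐ[ℂ] _).toAlgHom with hG
    have hecOn : ContinuousOn e (spectrum ℂ (x : Unitization ℂ A)) := hec.continuousOn
    set Y : B →L[ℂ] B := Ψ (cfc e (x : Unitization ℂ A)) with hY
    set ge : C(spectrum ℂ (x : Unitization ℂ A), ℂ) := ⟨_, hecOn.restrict⟩ with hge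
    have hYG : Y = G ge := by
      rw [hY, cfc_apply (a := (x : Unitization ℂ A)) (f := e) (ha := hsn) (hf := hecOn), hG]
      rfl
    set gid : C(spectrum ℂ (x : Unitization ℂ A), ℂ) :=
      (ContinuousMap.id ℂ).restrict (spectrum ℂ (x : Unitization ℂ A)) with hgid
    have hGgid : G gid = Ψ ((x : Unitization ℂ A)) := by
      rw [hG]
      show Ψ (cfcHom hsn gid) = _
      rw [hgid, cfcHom_id hsn]
    have hu : ‖G gid‖ ≤ ρ := by
      rw [hGgid, hΨinr]
      exact ContinuousLinearMap.opNorm_mul_apply_le ℂ B (φ x)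
    have hgvan : ∀ w : spectrum ℂ (x : Unitization ℂ A),
        ‖gid w‖ ≤ ρ → ge w = 0 := by
      intro w hw
      show e (w : ℂ) = 0
      apply hew
      simpa [hgid] using hw
    -- apply the auxiliary lemma
    set ε : ℝ := (2 * (1 + ‖φ (cfcₙ e x)‖))⁻¹ with hεdef
    have hδpos : (0:ℝ) < 1 + ‖φ (cfcₙ e x)‖ := by positivity
    have hε0 : 0 < ε := by positivity
    obtain ⟨n, hn0, hYn⟩ := aux_quasinilpotent G gid ge ρ hu hgvan hε0
    rw [← hYG] at hYn
    have hn1 : 1 ≤ n := by omega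
    -- now the algebraic part : `φ (cfcₙ f x) = 0`
    have hek0 : (fun z : ℂ => e z ^ n) 0 = 0 := by
      simp only [he0]
      exact zero_pow hn0
    have hekc : ContinuousOn (fun z : ℂ => e z ^ n) (quasispectrum ℂ x) :=
      (hec.pow n).continuousOn
    have hEk : Ψ ((cfcₙ (fun z : ℂ => e z ^ n) x : A) : Unitization ℂ A) = Y ^ n := by
      rw [Unitization.complex_cfcₙ_eq_cfc_inr x _ hek0]
      rw [cfc_pow e n (x : Unitization ℂ A) hecOn hsn]
      rw [map_pow, hY]
    have hmulEk : ContinuousLinearMap.mul ℂ B (φ (cfcₙ (fun z : ℂ => e z ^ n) x)) = Y ^ n := by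
      rw [← hΨinr, hEk]
    have hsplit : cfcₙ (fun z : ℂ => e z ^ (n+1)) x
        = cfcₙ (fun z : ℂ => e z ^ n) x * cfcₙ e x := by
      rw [← cfcₙ_mul (fun z : ℂ => e z ^ n) e x hekc hek0 hec.continuousOn he0]
      exact cfcₙ_congr fun z hz => pow_succ (e z) n
    have habsorb : cfcₙ f x * cfcₙ (fun z : ℂ => e z ^ (n+1)) x = cfcₙ f x := by
      rw [← cfcₙ_mul f (fun z : ℂ => e z ^ (n+1)) x hfc.continuousOn hf0
        (hec.pow (n+1)).continuousOn (by simp only [he0]; exact zero_pow (Nat.succ_ne_zero n))]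
      exact cfcₙ_congr fun z hz => hfe (n+1) z
    have hφsmall : ‖φ (cfcₙ (fun z : ℂ => e z ^ (n+1)) x)‖ ≤ ‖Y ^ n‖ * ‖φ (cfcₙ e x)‖ := by
      rw [hsplit, map_mul]
      calc ‖φ (cfcₙ (fun z : ℂ => e z ^ n) x) * φ (cfcₙ e x)‖
          = ‖(ContinuousLinearMap.mul ℂ B (φ (cfcₙ (fun z : ℂ => e z ^ n) x))) (φ (cfcₙ e x))‖ :=
            by rw [ContinuousLinearMap.mul_apply']
        _ = ‖(Y ^ n) (φ (cfcₙ e x))‖ := by rw [hmulEk]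
        _ ≤ ‖Y ^ n‖ * ‖φ (cfcₙ e x)‖ := ContinuousLinearMap.le_opNorm _ _
    have hzero : φ (cfcₙ f x) = 0 := by
      have h6 : ‖φ (cfcₙ f x)‖ ≤ ‖φ (cfcₙ f x)‖ * (‖Y ^ n‖ * ‖φ (cfcₙ e x)‖) := by
        calc ‖φ (cfcₙ f x)‖ = ‖φ (cfcₙ f x * cfcₙ (fun z : ℂ => e z ^ (n+1)) x)‖ := by
              rw [habsorb]
          _ = ‖φ (cfcₙ f x) * φ (cfcₙ (fun z : ℂ => e z ^ (n+1)) x)‖ := by rw [map_mul]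
          _ ≤ ‖φ (cfcₙ f x)‖ * ‖φ (cfcₙ (fun z : ℂ => e z ^ (n+1)) x)‖ := norm_mul_le _ _
          _ ≤ ‖φ (cfcₙ f x)‖ * (‖Y ^ n‖ * ‖φ (cfcₙ e x)‖) :=
              mul_le_mul_of_nonneg_left hφsmall (norm_nonneg _)
      have h7 : ‖Y ^ n‖ * ‖φ (cfcₙ e x)‖ ≤ 2⁻¹ := by
        calc ‖Y ^ n‖ * ‖φ (cfcₙ e x)‖ ≤ ε * (1 + ‖φ (cfcₙ e x)‖) :=
              mul_le_mul (le_of_lt hYn) (by linarith) (norm_nonneg _) (le_of_lt hε0)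
          _ = (2 * (1 + ‖φ (cfcₙ e x)‖))⁻¹ * (1 + ‖φ (cfcₙ e x)‖) := by rw [hεdef]
          _ = 2⁻¹ := by
              rw [mul_inv]
              field_simp
      have h8 : ‖φ (cfcₙ f x)‖ ≤ ‖φ (cfcₙ f x)‖ * 2⁻¹ :=
        h6.trans (mul_le_mul_of_nonneg_left h7 (norm_nonneg _))
      have h9 : ‖φ (cfcₙ f x)‖ = 0 := by
        have := norm_nonneg (φ (cfcₙ f x))
        linarith
      exact norm_eq_zero.mp h9
    -- but `cfcₙ f x ≠ 0`, contradiction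
    have hfa0 : cfcₙ f x = 0 := hinj (by rw [hzero, map_zero])
    obtain ⟨z₀, hz₀mem, hz₀⟩ := spectrum.exists_nnnorm_eq_spectralRadius
      (a := (x : Unitization ℂ A))
    have hrx : spectralRadius ℂ (x : Unitization ℂ A) = ‖(x : Unitization ℂ A)‖₊ :=
      hx'.spectralRadius_eq_nnnorm
    have habsz₀ : ‖z₀‖ = R := by
      have h11 : (‖z₀‖₊ : ℝ≥0∞) = (‖(x : Unitization ℂ A)‖₊ : ℝ≥0∞) := by rw [hz₀, hrx]
      have h11' : ‖z₀‖₊ = ‖(x : Unitization ℂ A)‖₊ := by exact_mod_cast h11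
      have h10 : ‖z₀‖ = ‖(x : Unitization ℂ A)‖ := by
        rw [← coe_nnnorm, ← coe_nnnorm, h11']
      rw [Unitization.norm_inr] at h10
      exact h10
    have hcfc0 : cfc f (x : Unitization ℂ A) = cfc (0 : ℂ → ℂ) (x : Unitization ℂ A) := by
      rw [← Unitization.complex_cfcₙ_eq_cfc_inr x f hf0, hfa0]
      simp
    have heqOn := eqOn_of_cfc_eq_cfc hcfc0 hfc.continuousOn continuousOn_const hsn
    have h12 := heqOn hz₀mem
    rw [hfdef] at h12
    simp only [Pi.zero_apply] at h12
    have hfz₀ : ((max 0 (‖z₀‖ - ρ₂) : ℝ) : ℂ) ≠ 0 := by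
      rw [habsz₀, max_eq_right (by linarith)]
      exact Complex.ofReal_ne_zero.mpr (by linarith)
    exact hfz₀ h12
  -- conclude for general `a`
  intro a
  have h1 : ‖star a * a‖ = ‖a‖ * ‖a‖ := CStarRing.norm_star_mul_self
  have h2 := key (star a * a) (IsSelfAdjoint.star_mul_self a)
  have h3 : φ (star a * a) = star (φ a) * φ a := by rw [map_mul, hφ]
  have h4 : ‖φ (star a * a)‖ ≤ ‖φ a‖ * ‖φ a‖ := by
    rw [h3]
    calc ‖star (φ a) * φ a‖ ≤ ‖star (φ a)‖ * ‖φ a‖ := norm_mul_le _ _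
      _ = ‖φ a‖ * ‖φ a‖ := by rw [norm_star]
  nlinarith [norm_nonneg a, norm_nonneg (φ a)]
end

section
/- Let X be a locally compact Hausdorff topological space. The map g ↦ (L_g, R_g), where L_g(f) := gf and R_g(f) := fg for f ∈ C₀(X), is an isometric *-isomorphism from the C*-algebra C_b(X) of bounded continuous complex-valued functions on X onto the multiplier algebra M(C₀(X)) of the C*-algebra C₀(X) of continuous complex-valued functions on X vanishing at infinity. -/
open ZeroAtInfty

open scoped MultiplierAlgebra Topology
set_option linter.unusedSectionVars false

namespace MultiplierC0Cb

open Filter BoundedContinuousFunction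

variable {X : Type*} [TopologicalSpace X] [LocallyCompactSpace X] [T2Space X]

lemma norm_apply_le (f : C₀(X, ℂ)) (x : X) : ‖f x‖ ≤ ‖f‖ := by
  rw [← ZeroAtInftyContinuousMap.norm_toBCF_eq_norm]
  exact f.toBCF.norm_coe_le_norm x

/-- Pointwise multiplication of a bounded continuous function with a `C₀` function. -/
noncomputable def mulC0 (g : X →ᵇ ℂ) (f : C₀(X, ℂ)) : C₀(X, ℂ) :=
  ⟨⟨fun y => g y * f y, g.continuous.mul (map_continuous f)⟩, by
    have h : Tendsto (fun y => ‖g‖ * ‖f y‖) (cocompact X) (𝓝 0) := by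
      simpa using (zero_at_infty f).norm.const_mul ‖g‖
    refine squeeze_zero_norm (fun y => ?_) h
    calc ‖g y * f y‖ = ‖g y‖ * ‖f y‖ := norm_mul _ _
      _ ≤ ‖g‖ * ‖f y‖ := by
          gcongr
          exact g.norm_coe_le_norm y⟩

@[simp] lemma mulC0_apply (g : X →ᵇ ℂ) (f : C₀(X, ℂ)) (x : X) :
    mulC0 g f x = g x * f x := rfl

lemma norm_mulC0_le (g : X →ᵇ ℂ) (f : C₀(X, ℂ)) : ‖mulC0 g f‖ ≤ ‖g‖ * ‖f‖ := by
  rw [← ZeroAtInftyContinuousMap.norm_toBCF_eq_norm]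
  refine (BoundedContinuousFunction.norm_le (by positivity)).2 fun x => ?_
  calc ‖(mulC0 g f).toBCF x‖ = ‖g x‖ * ‖f x‖ := norm_mul _ _
    _ ≤ ‖g‖ * ‖f‖ := by
        gcongr
        · exact g.norm_coe_le_norm x
        · exact norm_apply_le f x

/-- Left multiplication as a continuous linear map. -/
noncomputable def mulL (g : X →ᵇ ℂ) : C₀(X, ℂ) →L[ℂ] C₀(X, ℂ) :=
  LinearMap.mkContinuous
    { toFun := mulC0 g
      map_add' := fun f₁ f₂ => ZeroAtInftyContinuousMap.ext fun x => by
        simp [mul_add]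
      map_smul' := fun c f => ZeroAtInftyContinuousMap.ext fun x => by
        simp [mul_comm, mul_left_comm] }
    ‖g‖ (norm_mulC0_le g)

@[simp] lemma mulL_apply (g : X →ᵇ ℂ) (f : C₀(X, ℂ)) (x : X) :
    mulL g f x = g x * f x := rfl

/-- The double centralizer associated to a bounded continuous function. -/
noncomputable def Phi (g : X →ᵇ ℂ) : 𝓜(ℂ, C₀(X, ℂ)) where
  toProd := (mulL g, mulL g)
  central := fun f₁ f₂ => ZeroAtInftyContinuousMap.ext fun x => by
    simp [mul_comm, mul_left_comm]

@[simp] lemma Phi_fst_apply (g : X →ᵇ ℂ) (f : C₀(X, ℂ)) (x : X) :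
    (Phi g).toProd.1 f x = g x * f x := rfl

@[simp] lemma Phi_snd_apply (g : X →ᵇ ℂ) (f : C₀(X, ℂ)) (x : X) :
    (Phi g).toProd.2 f x = g x * f x := rfl

lemma exists_bump (x : X) :
    ∃ e : C₀(X, ℂ), ‖e‖ ≤ 1 ∧ ∀ᶠ y in 𝓝 x, e y = 1 := by
  obtain ⟨K, hK, hKx⟩ := exists_compact_mem_nhds x
  obtain ⟨f, hf1, -, hfc, hf01⟩ :=
    exists_continuous_one_zero_of_isCompact hK isClosed_empty (Set.disjoint_empty K)
  have hc : Continuous fun y => ((f y : ℝ) : ℂ) :=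
    Complex.continuous_ofReal.comp f.continuous
  have hcs : HasCompactSupport fun y => ((f y : ℝ) : ℂ) :=
    hfc.comp_left (g := fun r : ℝ => (r : ℂ)) (by simp)
  refine ⟨⟨⟨fun y => ((f y : ℝ) : ℂ), hc⟩, hcs.is_zero_at_infty⟩, ?_, ?_⟩
  · rw [← ZeroAtInftyContinuousMap.norm_toBCF_eq_norm]
    refine (BoundedContinuousFunction.norm_le zero_le_one).2 fun y => ?_
    have h1 := (hf01 y).1
    have h2 := (hf01 y).2
    show ‖((f y : ℝ) : ℂ)‖ ≤ 1
    rw [Complex.norm_real, Real.norm_eq_abs, abs_le]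
    constructor <;> linarith
  · filter_upwards [hKx] with y hy
    have : f y = 1 := hf1 hy
    simp [this]

end MultiplierC0Cb

open MultiplierC0Cb

/-- For a locally compact Hausdorff space `X`, the map `g ↦ (L_g, R_g)`, where
`L_g f = g f` and `R_g f = f g` pointwise, is an isometric *-isomorphism from the
C*-algebra `C_b(X)` of bounded continuous functions onto the multiplier algebra
`M(C₀(X))` of the C*-algebra of continuous functions vanishing at infinity. -/
theorem multiplier_C0_eq_Cb {X : Type*} [TopologicalSpace X] [LocallyCompactSpace X]
    [T2Space X] :
    ∃ Φ : BoundedContinuousFunction X ℂ → DoubleCentralizer ℂ C₀(X, ℂ),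
      (∀ (g : BoundedContinuousFunction X ℂ) (f : C₀(X, ℂ)) (x : X),
        ((Φ g).toProd.1 f) x = g x * f x) ∧
      (∀ (g : BoundedContinuousFunction X ℂ) (f : C₀(X, ℂ)) (x : X),
        ((Φ g).toProd.2 f) x = f x * g x) ∧
      Function.Bijective Φ ∧
      Isometry Φ ∧
      (∀ g h : BoundedContinuousFunction X ℂ, Φ (g + h) = Φ g + Φ h) ∧
      (∀ (c : ℂ) (g : BoundedContinuousFunction X ℂ), Φ (c • g) = c • Φ g) ∧
      (∀ g h : BoundedContinuousFunction X ℂ, Φ (g * h) = Φ g * Φ h) ∧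
      (∀ g : BoundedContinuousFunction X ℂ, Φ (star g) = star (Φ g)) := by
  classical
  have hadd : ∀ g h : BoundedContinuousFunction X ℂ, Phi (g + h) = Phi g + Phi h := by
    intro g h
    refine DoubleCentralizer.ext _ _ _ _ ?_
    rw [DoubleCentralizer.add_toProd]
    refine Prod.ext ?_ ?_ <;>
    · ext f x
      simp [add_mul]
  have hsmul : ∀ (c : ℂ) (g : BoundedContinuousFunction X ℂ), Phi (c • g) = c • Phi g := by
    intro c g
    refine DoubleCentralizer.ext _ _ _ _ ?_
    rw [DoubleCentralizer.smul_toProd]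
    refine Prod.ext ?_ ?_ <;>
    · ext f x
      simp [mul_assoc]
  have hmul : ∀ g h : BoundedContinuousFunction X ℂ, Phi (g * h) = Phi g * Phi h := by
    intro g h
    refine DoubleCentralizer.ext _ _ _ _ ?_
    refine Prod.ext ?_ ?_
    · rw [DoubleCentralizer.mul_fst]
      ext f x
      simp [mul_assoc]
    · rw [DoubleCentralizer.mul_snd]
      ext f x
      simp [mul_assoc, mul_comm, mul_left_comm]
  have hstar : ∀ g : BoundedContinuousFunction X ℂ, Phi (star g) = star (Phi g) := by
    intro g
    refine DoubleCentralizer.ext _ _ _ _ ?_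
    refine Prod.ext ?_ ?_
    · ext f x
      rw [DoubleCentralizer.star_fst]
      simp [mul_comm]
    · ext f x
      rw [DoubleCentralizer.star_snd]
      simp [mul_comm]
  have hnorm : ∀ g : BoundedContinuousFunction X ℂ, ‖Phi g‖ = ‖g‖ := by
    intro g
    rw [← DoubleCentralizer.norm_fst]
    refine le_antisymm (LinearMap.mkContinuous_norm_le _ (norm_nonneg g) (norm_mulC0_le g)) ?_
    refine (BoundedContinuousFunction.norm_le (norm_nonneg _)).2 fun x => ?_
    obtain ⟨e, hen, hev⟩ := exists_bump x
    have he : e x = 1 := hev.self_of_nhds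
    have : ‖g x‖ ≤ ‖mulL g‖ := by
      calc ‖g x‖ = ‖(mulL g e) x‖ := by simp [he]
        _ ≤ ‖mulL g e‖ := norm_apply_le _ x
        _ ≤ ‖mulL g‖ * ‖e‖ := (mulL g).le_opNorm e
        _ ≤ ‖mulL g‖ * 1 := by gcongr
        _ = ‖mulL g‖ := mul_one _
    exact this
  have hiso : Isometry (Phi (X := X)) := by
    refine Isometry.of_dist_eq fun g h => ?_
    have hsub : Phi (g - h) = Phi g - Phi h := by
      have h1 := hadd (g - h) h
      rw [sub_add_cancel] at h1
      rw [h1, add_sub_cancel_right]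
    rw [dist_eq_norm, dist_eq_norm, ← hsub, hnorm]
  have hsurj : Function.Surjective (Phi (X := X)) := by
    intro a
    choose E hEn hEev using exists_bump (X := X)
    have hE1 : ∀ x : X, E x x = 1 := fun x => (hEev x).self_of_nhds
    have key : ∀ (x : X) (e : C₀(X, ℂ)), e x = 1 →
        (a.toProd.1 e) x = (a.toProd.1 (E x)) x := by
      intro x e he
      have h1 := congrArg (fun f : C₀(X, ℂ) => f x) (a.central (E x) e)
      have h2 := congrArg (fun f : C₀(X, ℂ) => f x) (a.central (E x) (E x))
      simp only [ZeroAtInftyContinuousMap.mul_apply] at h1 h2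
      rw [he, hE1 x, mul_one, one_mul] at h1
      rw [hE1 x, mul_one, one_mul] at h2
      rw [← h1, h2]
    have hcont : Continuous fun x : X => (a.toProd.1 (E x)) x := by
      rw [continuous_iff_continuousAt]
      intro x
      have hev : (fun y : X => (a.toProd.1 (E y)) y) =ᶠ[nhds x]
          fun y : X => (a.toProd.1 (E x)) y := by
        filter_upwards [hEev x] with y hy
        exact (key y (E x) hy).symm
      exact ((map_continuous (a.toProd.1 (E x))).continuousAt).congr hev.symm
    have hbd : ∀ x : X, ‖(a.toProd.1 (E x)) x‖ ≤ ‖a.toProd.1‖ := fun x =>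
      (norm_apply_le _ x).trans (((a.toProd.1).le_opNorm (E x)).trans
        (mul_le_of_le_one_right (norm_nonneg _) (hEn x)))
    set g : BoundedContinuousFunction X ℂ :=
      BoundedContinuousFunction.ofNormedAddCommGroup _ hcont ‖a.toProd.1‖ hbd with hg
    have hgx : ∀ x : X, g x = (a.toProd.1 (E x)) x := fun x => rfl
    refine ⟨g, ?_⟩
    refine DoubleCentralizer.ext _ _ _ _ ?_
    refine Prod.ext ?_ ?_
    · ext f x
      have h2 := congrArg (fun f : C₀(X, ℂ) => f x) (a.central (E x) (E x))
      have h3 := congrArg (fun f : C₀(X, ℂ) => f x) (a.central (E x) f)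
      simp only [ZeroAtInftyContinuousMap.mul_apply] at h2 h3
      rw [hE1 x, mul_one, one_mul] at h2
      rw [hE1 x, one_mul] at h3
      show g x * f x = a.toProd.1 f x
      rw [hgx x, ← h2, h3]
    · ext f x
      have h2 := congrArg (fun f : C₀(X, ℂ) => f x) (a.central (E x) (E x))
      have h4 := congrArg (fun f' : C₀(X, ℂ) => f' x) (a.central f (E x))
      simp only [ZeroAtInftyContinuousMap.mul_apply] at h2 h4
      rw [hE1 x, mul_one, one_mul] at h2
      rw [hE1 x, mul_one] at h4
      show g x * f x = a.toProd.2 f x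
      rw [hgx x, h4, mul_comm]
  refine ⟨Phi, fun g f x => rfl, fun g f x => mul_comm (g x) (f x),
    ⟨hiso.injective, hsurj⟩, hiso, hadd, hsmul, hmul, hstar⟩
end

section
/- Let H be a complex Hilbert space and let M be a C*-subalgebra of B(H) acting non-degenerately on H, i.e., if x ∈ H satisfies Tx = 0 for all T ∈ M, then x = 0. Then the following are equivalent: (i) M = M'' (M equals its double commutant in B(H)); (ii) M is closed in the weak operator topology of B(H); (iii) M is closed in the strong operator topology of B(H) (von Neumann bicommutant theorem). -/
set_option maxHeartbeats 1000000
set_option synthInstance.maxHeartbeats 200000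

open scoped InnerProductSpace

noncomputable section VNAux

local notation "⟪" x ", " y "⟫" => @inner ℂ _ _ x y

variable {H : Type*} [NormedAddCommGroup H] [InnerProductSpace ℂ H] [CompleteSpace H]
variable {ι : Type*} [Fintype ι] [DecidableEq ι]

instance : CompleteSpace (PiLp 2 fun _ : ι => H) :=
  inferInstance

set_option linter.unusedSectionVars false

/-- The diagonal amplification of an operator to `H^ι` (with the `L²` norm). -/
def vnAmp (ι : Type*) [Fintype ι] (A : H →L[ℂ] H) :
    (PiLp 2 fun _ : ι => H) →L[ℂ] (PiLp 2 fun _ : ι => H) where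
  toFun x := WithLp.toLp 2 fun i => A (x i)
  map_add' x y := by ext i; simp
  map_smul' c x := by ext i; simp
  cont := by
    exact (PiLp.continuous_toLp 2 _).comp (continuous_pi fun i =>
      A.continuous.comp ((continuous_apply i).comp (PiLp.continuous_ofLp 2 _)))

@[simp] lemma vnAmp_apply (A : H →L[ℂ] H) (x : PiLp 2 fun _ : ι => H) (i : ι) :
    vnAmp ι A x i = A (x i) := rfl

lemma vnAmp_comp (A B : H →L[ℂ] H) :
    vnAmp ι (A ∘L B) = vnAmp ι A ∘L vnAmp ι B := by
  ext x; rfl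

lemma vnAmp_add (A B : H →L[ℂ] H) :
    vnAmp ι (A + B) = vnAmp ι A + vnAmp ι B := by
  ext x; rfl

lemma vnAmp_smul (c : ℂ) (A : H →L[ℂ] H) :
    vnAmp ι (c • A) = c • vnAmp ι A := by
  ext x; rfl

lemma vnAmp_adjoint (A : H →L[ℂ] H) :
    ContinuousLinearMap.adjoint (vnAmp ι A) = vnAmp ι (ContinuousLinearMap.adjoint A) := by
  symm
  rw [ContinuousLinearMap.eq_adjoint_iff]
  intro x y
  simp only [PiLp.inner_apply, vnAmp_apply]
  exact Finset.sum_congr rfl fun i _ => ContinuousLinearMap.adjoint_inner_left A (y i) (x i)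

/-- Coordinate inclusion `H →L H^ι`. -/
def vnSingle (i : ι) : H →L[ℂ] (PiLp 2 fun _ : ι => H) where
  toFun y := WithLp.toLp 2 (Pi.single i y)
  map_add' x y := by rw [Pi.single_add, WithLp.toLp_add]
  map_smul' c x := by ext j; by_cases h : j = i <;> simp [h]
  cont := by
    refine (PiLp.continuous_toLp 2 (fun _ : ι => H)).comp
      (f := fun y : H => (Pi.single i y : ∀ _ : ι, H)) ?_
    refine continuous_pi fun j => ?_
    rcases eq_or_ne j i with h | h
    · subst h; simpa [Pi.single_apply] using continuous_id'
    · simpa [Pi.single_apply, h] using (continuous_const : Continuous fun _ : H => (0 : H))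

@[simp] lemma vnSingle_apply (i : ι) (y : H) (j : ι) :
    vnSingle i y j = (Pi.single i y : ∀ _ : ι, H) j := rfl

/-- Coordinate projection `H^ι →L H`. -/
def vnProj (i : ι) : (PiLp 2 fun _ : ι => H) →L[ℂ] H where
  toFun x := x i
  map_add' _ _ := rfl
  map_smul' _ _ := rfl
  cont := by
    show Continuous fun x : PiLp 2 (fun _ : ι => H) => x i
    exact (continuous_apply i).comp (PiLp.continuous_ofLp 2 _)

@[simp] lemma vnProj_apply (i : ι) (x : PiLp 2 fun _ : ι => H) : vnProj i x = x i := rfl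

/-- Matrix entry of an operator on `H^ι`. -/
def vnEntry (S : (PiLp 2 fun _ : ι => H) →L[ℂ] (PiLp 2 fun _ : ι => H)) (i j : ι) :
    H →L[ℂ] H :=
  vnProj i ∘L S ∘L vnSingle j

lemma vnSingle_comp (A : H →L[ℂ] H) (j : ι) (y : H) :
    vnSingle j (A y) = vnAmp ι A (vnSingle j y) := by
  ext i
  show (Pi.single j (A y) : ∀ _ : ι, H) i = A ((Pi.single j y : ∀ _ : ι, H) i)
  rcases eq_or_ne i j with h | h
  · subst h; simp
  · rw [Pi.single_eq_of_ne h, Pi.single_eq_of_ne h, map_zero]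

lemma vnEntry_comm {S : (PiLp 2 fun _ : ι => H) →L[ℂ] (PiLp 2 fun _ : ι => H)}
    {A : H →L[ℂ] H} (h : S ∘L vnAmp ι A = vnAmp ι A ∘L S) (i j : ι) :
    vnEntry S i j ∘L A = A ∘L vnEntry S i j := by
  ext y
  show vnProj i (S (vnSingle j (A y))) = A (vnProj i (S (vnSingle j y)))
  rw [vnSingle_comp, ← ContinuousLinearMap.comp_apply S, h]
  rfl

lemma vnDecomp (x : PiLp 2 fun _ : ι => H) : x = ∑ j, vnSingle j (x j) := by
  ext i
  have : vnProj i (∑ j, vnSingle j (x j)) = ∑ j, vnProj i (vnSingle j (x j)) :=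
    map_sum (vnProj i) _ _
  show x i = vnProj i (∑ j, vnSingle j (x j))
  rw [this]
  simp only [vnProj_apply, vnSingle_apply]
  rw [← Finset.sum_apply]
  exact (congrFun (Finset.univ_sum_single x.ofLp) i).symm

lemma vnEntry_sum (S : (PiLp 2 fun _ : ι => H) →L[ℂ] (PiLp 2 fun _ : ι => H))
    (x : PiLp 2 fun _ : ι => H) (i : ι) :
    S x i = ∑ j, vnEntry S i j (x j) := by
  conv_lhs => rw [vnDecomp x, map_sum]
  exact map_sum (vnProj i) _ _

lemma vnAmp_comm_of_entries {S : (PiLp 2 fun _ : ι => H) →L[ℂ] (PiLp 2 fun _ : ι => H)}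
    {T : H →L[ℂ] H} (h : ∀ i j, T ∘L vnEntry S i j = vnEntry S i j ∘L T) :
    S ∘L vnAmp ι T = vnAmp ι T ∘L S := by
  ext x i
  show S (vnAmp ι T x) i = T (S x i)
  rw [vnEntry_sum S (vnAmp ι T x) i, vnEntry_sum S x i, map_sum]
  refine Finset.sum_congr rfl fun j _ => ?_
  have := congrFun (congrArg DFunLike.coe (h i j)) (x j)
  simpa using this.symm

/-- An orthogonal projection onto an invariant (under `A` and `A†`) closed subspace
commutes with `A`. -/
lemma vnProjComm {E : Type*} [NormedAddCommGroup E] [InnerProductSpace ℂ E] [CompleteSpace E]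
    (K : Submodule ℂ E) [K.HasOrthogonalProjection] (A : E →L[ℂ] E)
    (h1 : ∀ x ∈ K, A x ∈ K) (h2 : ∀ x ∈ K, ContinuousLinearMap.adjoint A x ∈ K) :
    (K.subtypeL ∘L K.orthogonalProjectionOnto) ∘L A = A ∘L (K.subtypeL ∘L K.orthogonalProjectionOnto) := by
  ext x
  have hx : x = (K.orthogonalProjectionOnto x : E) + (x - K.orthogonalProjectionOnto x) := by abel
  have horth : A (x - K.orthogonalProjectionOnto x) ∈ Kᗮ := by
    rw [Submodule.mem_orthogonal]
    intro u hu
    have := Submodule.sub_starProjection_mem_orthogonal (K := K) x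
    have h0 : ⟪(ContinuousLinearMap.adjoint A) u, x - K.orthogonalProjectionOnto x⟫ = 0 :=
      (Submodule.mem_orthogonal K _).1 this _ (h2 u hu)
    rwa [ContinuousLinearMap.adjoint_inner_left] at h0
  show (K.orthogonalProjectionOnto (A x) : E) = A (K.orthogonalProjectionOnto x)
  conv_lhs => rw [hx]
  rw [map_add, map_add, Submodule.coe_add]
  rw [show ((K.orthogonalProjectionOnto (A (K.orthogonalProjectionOnto x))) : E) =
      A (K.orthogonalProjectionOnto x) from
      Submodule.starProjection_eq_self_iff.2 (h1 _ (K.orthogonalProjectionOnto x).2),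
    Submodule.orthogonalProjectionOnto_apply_of_mem_orthogonal horth]
  simp

lemma vnCoordNormLe (v : PiLp 2 fun _ : ι => H) (i : ι) : ‖v i‖ ≤ ‖v‖ := by
  have h1 : ‖v i‖ ^ 2 ≤ ‖v‖ ^ 2 := by
    rw [PiLp.norm_sq_eq_of_L2]
    exact Finset.single_le_sum (f := fun j => ‖v j‖ ^ 2)
      (fun j _ => sq_nonneg _) (Finset.mem_univ i)
  nlinarith [norm_nonneg (v i), norm_nonneg v]

/-- Key approximation: an element of the double commutant can be approximated in the strong
operator topology by elements of `M`. -/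
lemma vnApprox (M : NonUnitalStarSubalgebra ℂ (H →L[ℂ] H))
    (hnondeg : ∀ x : H, (∀ T ∈ M, T x = 0) → x = 0)
    {T : H →L[ℂ] H}
    (hT : T ∈ Set.centralizer (Set.centralizer (M : Set (H →L[ℂ] H))))
    (I : Finset H) {ε : ℝ} (hε : 0 < ε) :
    ∃ A ∈ M, ∀ x ∈ I, ‖A x - T x‖ < ε := by
  classical
  set ι := {x // x ∈ I}
  set E := PiLp 2 fun _ : ι => H with hE
  set xv : E := WithLp.toLp 2 fun i => (i : H) with hxv
  -- the submodule `{A x̂ : A ∈ M}` and its closure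
  set p : Submodule ℂ E :=
    { carrier := (fun A : H →L[ℂ] H => vnAmp ι A xv) '' M
      add_mem' := by
        rintro _ _ ⟨A, hA, rfl⟩ ⟨B, hB, rfl⟩
        exact ⟨A + B, add_mem hA hB, by show vnAmp ι (A + B) xv = _; rw [vnAmp_add]; rfl⟩
      zero_mem' := ⟨0, zero_mem _, by ext i; rfl⟩
      smul_mem' := by
        rintro c _ ⟨A, hA, rfl⟩
        exact ⟨c • A, SMulMemClass.smul_mem c hA, by show vnAmp ι (c • A) xv = _; rw [vnAmp_smul]; rfl⟩ } with hp
  set K := p.topologicalClosure with hK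
  haveI : K.HasOrthogonalProjection := by
    haveI : CompleteSpace K := (p.isClosed_topologicalClosure).completeSpace_coe
    infer_instance
  -- invariance of K
  have hinv : ∀ A ∈ M, ∀ y ∈ K, vnAmp ι A y ∈ K := by
    intro A hA y hy
    have hmaps : (vnAmp ι A) '' (p : Set E) ⊆ (p : Set E) := by
      rintro _ ⟨_, ⟨B, hB, rfl⟩, rfl⟩
      exact ⟨A * B, mul_mem hA hB,
        by show vnAmp ι (A * B) xv = _; rw [show (A * B : H →L[ℂ] H) = A ∘L B from rfl, vnAmp_comp]; rfl⟩
    have : vnAmp ι A y ∈ closure ((vnAmp ι A) '' (p : Set E)) :=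
      image_closure_subset_closure_image (vnAmp ι A).continuous ⟨y, hy, rfl⟩
    exact closure_mono hmaps this
  have hadjinv : ∀ A ∈ M, ∀ y ∈ K, ContinuousLinearMap.adjoint (vnAmp ι A) y ∈ K := by
    intro A hA y hy
    rw [vnAmp_adjoint]
    exact hinv _ (by simpa [ContinuousLinearMap.star_eq_adjoint] using star_mem hA) y hy
  set P : E →L[ℂ] E := K.subtypeL ∘L K.orthogonalProjectionOnto with hP
  have hPmem : ∀ z : E, P z ∈ K := fun z => (K.orthogonalProjectionOnto z).2
  have hPcomm : ∀ A ∈ M, P ∘L vnAmp ι A = vnAmp ι A ∘L P := fun A hA =>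
    vnProjComm K (vnAmp ι A) (hinv A hA) (hadjinv A hA)
  -- x̂ ∈ K by nondegeneracy
  have hxvK : xv ∈ K := by
    set r : E := xv - P xv with hr
    have hrorth : r ∈ Kᗮ := Submodule.sub_starProjection_mem_orthogonal (K := K) xv
    have hr0 : r = 0 := by
      have hcomp : ∀ i : ι, r i = 0 := by
        intro i
        apply hnondeg
        intro A hA
        have hKmem : vnAmp ι A r ∈ K := by
          have h' : vnAmp ι A r = vnAmp ι A xv - vnAmp ι A (P xv) := by rw [hr, map_sub]
          rw [h']
          exact sub_mem (p.le_topologicalClosure ⟨A, hA, rfl⟩) (hinv A hA _ (hPmem xv))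
        have hKorth : vnAmp ι A r ∈ Kᗮ := by
          rw [Submodule.mem_orthogonal]
          intro u hu
          have h0 : ⟪(ContinuousLinearMap.adjoint (vnAmp ι A)) u, r⟫ = 0 :=
            (Submodule.mem_orthogonal K r).1 hrorth _ (hadjinv A hA u hu)
          rwa [ContinuousLinearMap.adjoint_inner_left] at h0
        have hz : vnAmp ι A r = 0 :=
          inner_self_eq_zero.1 ((Submodule.mem_orthogonal K _).1 hKorth _ hKmem)
        calc A (r i) = vnAmp ι A r i := rfl
        _ = 0 := by rw [hz]; rfl
      ext i
      exact hcomp i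
    have : xv = P xv := by rwa [hr, sub_eq_zero] at hr0
    rw [this]; exact hPmem xv
  -- amp T commutes with P
  have hTP : P ∘L vnAmp ι T = vnAmp ι T ∘L P := by
    apply vnAmp_comm_of_entries
    intro i j
    have hentry : vnEntry P i j ∈ Set.centralizer (M : Set (H →L[ℂ] H)) := by
      rw [Set.mem_centralizer_iff]
      intro A hA
      exact (vnEntry_comm (hPcomm A hA) i j).symm
    exact ((Set.mem_centralizer_iff.1 hT) _ hentry).symm
  -- T x̂ ∈ K
  have hTxK : vnAmp ι T xv ∈ K := by
    have h1 : P (vnAmp ι T xv) = vnAmp ι T (P xv) := by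
      have := congrFun (congrArg DFunLike.coe hTP) xv
      simpa using this
    have hPxv : P xv = xv := by
      show (K.orthogonalProjectionOnto xv : E) = xv
      exact Submodule.starProjection_eq_self_iff.2 hxvK
    rw [hPxv] at h1
    rw [← h1]
    exact hPmem _
  -- approximation
  have hcl : vnAmp ι T xv ∈ closure (p : Set E) := hTxK
  rw [Metric.mem_closure_iff] at hcl
  obtain ⟨b, ⟨A, hA, rfl⟩, hdist⟩ := hcl ε hε
  refine ⟨A, hA, fun x hx => ?_⟩
  have hle : ‖(vnAmp ι A xv - vnAmp ι T xv : E) ⟨x, hx⟩‖ ≤ ‖(vnAmp ι A xv - vnAmp ι T xv : E)‖ :=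
    vnCoordNormLe _ _
  have heq : (vnAmp ι A xv - vnAmp ι T xv : E) ⟨x, hx⟩ = A x - T x := rfl
  rw [heq] at hle
  calc ‖A x - T x‖ ≤ ‖(vnAmp ι A xv - vnAmp ι T xv : E)‖ := hle
  _ = dist (vnAmp ι T xv) (vnAmp ι A xv) := by rw [dist_eq_norm, ← norm_neg]; congr 1; abel
  _ < ε := hdist

end VNAux

/-- **Von Neumann bicommutant theorem.** Let `M` be a C*-subalgebra of `B(H)` acting
non-degenerately on the complex Hilbert space `H`.  Then the following are equivalent:
(i) `M` equals its double commutant `M''`;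
(ii) `M` is closed in the weak operator topology;
(iii) `M` is closed in the strong operator topology.
The weak (resp. strong) operator topology on `B(H)` is the topology induced by the maps
`T ↦ (fun (x, y) => ⟪T x, y⟫)` (resp. `T ↦ (T : H → H)`) into the corresponding product
spaces. -/
theorem von_neumann_bicommutant {H : Type*} [NormedAddCommGroup H]
    [InnerProductSpace ℂ H] [CompleteSpace H]
    (M : NonUnitalStarSubalgebra ℂ (H →L[ℂ] H))
    (hM : IsClosed (M : Set (H →L[ℂ] H)))
    (hnondeg : ∀ x : H, (∀ T ∈ M, T x = 0) → x = 0) :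
    List.TFAE
      [ (M : Set (H →L[ℂ] H)) =
          Set.centralizer (Set.centralizer (M : Set (H →L[ℂ] H))),
        @IsClosed _
          (TopologicalSpace.induced
            (fun (T : H →L[ℂ] H) => (fun p : H × H => (inner ℂ (T p.1) p.2 : ℂ)))
            Pi.topologicalSpace)
          (M : Set (H →L[ℂ] H)),
        @IsClosed _
          (TopologicalSpace.induced (fun (T : H →L[ℂ] H) => (T : H → H))
            Pi.topologicalSpace)
          (M : Set (H →L[ℂ] H)) ] := by
  classical
  set f : (H →L[ℂ] H) → (H × H → ℂ) :=
    fun T => fun p : H × H => (inner ℂ (T p.1) p.2 : ℂ) with hf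
  set g : (H →L[ℂ] H) → (H → H) := fun T => (T : H → H) with hg
  set wot : TopologicalSpace (H →L[ℂ] H) :=
    TopologicalSpace.induced f Pi.topologicalSpace with hwot
  set sot : TopologicalSpace (H →L[ℂ] H) :=
    TopologicalSpace.induced g Pi.topologicalSpace with hsot
  tfae_have 1 → 2 := by
    intro h1
    rw [h1]
    -- the double centralizer is WOT-closed
    have hset : Set.centralizer (Set.centralizer (M : Set (H →L[ℂ] H))) =
        ⋂ S ∈ Set.centralizer (M : Set (H →L[ℂ] H)),
          ⋂ (x : H), ⋂ (y : H),
            {T : H →L[ℂ] H | f T (S x, y) = f T (x, ContinuousLinearMap.adjoint S y)} := by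
      ext T
      simp only [Set.mem_iInter, Set.mem_setOf_eq, Set.mem_centralizer_iff]
      constructor
      · intro h S hS x y
        have hST : S * T = T * S := h S hS
        show (inner ℂ (T (S x)) y : ℂ) = inner ℂ (T x) (ContinuousLinearMap.adjoint S y)
        rw [ContinuousLinearMap.adjoint_inner_right]
        congr 1
        calc T (S x) = (T * S) x := rfl
        _ = (S * T) x := by rw [hST]
        _ = S (T x) := rfl
      · intro h S hS
        ext x
        apply ext_inner_right ℂ
        intro y
        have hxy := h S hS x y
        show (inner ℂ (S (T x)) y : ℂ) = inner ℂ (T (S x)) y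
        symm
        rw [show (inner ℂ (T (S x)) y : ℂ) = inner ℂ (T x) (ContinuousLinearMap.adjoint S y) from hxy,
          ContinuousLinearMap.adjoint_inner_right]
    rw [hset]
    refine @isClosed_biInter _ _ wot _ _ fun S hS => @isClosed_iInter _ _ wot _ fun x =>
      @isClosed_iInter _ _ wot _ fun y => ?_
    have hpre : {T : H →L[ℂ] H | f T (S x, y) = f T (x, ContinuousLinearMap.adjoint S y)} =
        f ⁻¹' {u : H × H → ℂ | u (S x, y) = u (x, ContinuousLinearMap.adjoint S y)} := rfl
    rw [hpre]
    have hclosed :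
        IsClosed {u : H × H → ℂ | u (S x, y) = u (x, ContinuousLinearMap.adjoint S y)} :=
      isClosed_eq (continuous_apply _) (continuous_apply _)
    exact @IsClosed.preimage _ _ wot _ f (by exact continuous_induced_dom) _ hclosed
  tfae_have 2 → 3 := by
    intro h2
    have hle : sot ≤ wot := by
      have hcont : @Continuous _ _ sot Pi.topologicalSpace f := by
        rw [continuous_iff_le_induced]
        have hfg : f = (fun u : H → H => fun p : H × H => (inner ℂ (u p.1) p.2 : ℂ)) ∘ g := rfl
        rw [hfg, ← induced_compose]
        apply induced_mono
        rw [← continuous_iff_le_induced]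
        exact continuous_pi fun p =>
          Continuous.inner ((continuous_apply p.1)) continuous_const
      rwa [continuous_iff_le_induced] at hcont
    exact @IsClosed.mono _ _ _ _ h2 hle
  tfae_have 3 → 1 := by
    intro h3
    apply Set.Subset.antisymm
    · intro A hA
      rw [Set.mem_centralizer_iff]
      intro S hS
      exact ((Set.mem_centralizer_iff).1 hS A hA).symm
    · intro T hT
      -- T is in the SOT closure of M, which equals M
      have hTmem : T ∈ @closure _ sot (M : Set (H →L[ℂ] H)) := by
        letI := sot
        rw [mem_closure_iff]
        intro o ho hTo
        rw [isOpen_induced_iff] at ho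
        obtain ⟨t, ht, rfl⟩ := ho
        rw [isOpen_pi_iff] at ht
        obtain ⟨I, u, hu, hsub⟩ := ht (g T) hTo
        have hδ : ∀ x : H, ∃ δ : ℝ, 0 < δ ∧ (x ∈ I → Metric.ball (T x) δ ⊆ u x) := by
          intro x
          by_cases hx : x ∈ I
          · obtain ⟨δ, hδpos, hδ⟩ := Metric.isOpen_iff.1 (hu x hx).1 (T x) (hu x hx).2
            exact ⟨δ, hδpos, fun _ => hδ⟩
          · exact ⟨1, one_pos, fun h => absurd h hx⟩
        choose δ hδpos hδball using hδ
        rcases I.eq_empty_or_nonempty with hI | hI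
        · refine ⟨0, ?_, zero_mem M⟩
          apply hsub
          intro x hx
          rw [hI] at hx
          exact absurd hx (by simp)
        · set ε := I.inf' hI δ with hε
          have hεpos : 0 < ε := (Finset.lt_inf'_iff hI).2 fun x _ => hδpos x
          obtain ⟨A, hAM, hAapprox⟩ := vnApprox M hnondeg hT I hεpos
          refine ⟨A, ?_, hAM⟩
          apply hsub
          intro x hx
          apply hδball x hx
          rw [Metric.mem_ball, dist_eq_norm]
          calc ‖A x - T x‖ < ε := hAapprox x hx
          _ ≤ δ x := Finset.inf'_le _ hx
      letI := sot
      rwa [IsClosed.closure_eq h3] at hTmem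
  tfae_finish
end
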